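/- arXiv:1409.7996 — 4 statements merged into one kernel-verified Lean document; each statement's English description precedes it below -/
import Mathlib

section
/- For a regular weight λ, a vertex v of GT_λ is a simplicial vertex (i.e., v is contained in exactly dim GT_λ = n(n+1)/2 − n facets) if and only if the associated graph Γ_v is acyclic, equivalently, if and only if no connected component of Γ_v contains two nodes from the same row. -/
open scoped BigOperators Classical

/-- Index type for Gelfand–Tsetlin pattern positions: (row, column), 0-based. -/
abbrev GTIdx (n : ℕ) := Fin n × Fin n

/-- A position (i,j) is a valid pattern position iff i + j < n (row i has columns 0..n-1-i). -/
def GTValid (n : ℕ) (p : GTIdx n) : Prop := (p.1 : ℕ) + (p.2 : ℕ) < n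

/-- Entry of a real point at natural-number coordinates (0 outside the index range). -/
noncomputable def entryR {n : ℕ} (A : GTIdx n → ℝ) (i j : ℕ) : ℝ :=
  if h : i < n ∧ j < n then A (⟨i, h.1⟩, ⟨j, h.2⟩) else 0

/-- Entry of an integer point at natural-number coordinates (0 outside the index range). -/
def entryZ {n : ℕ} (A : GTIdx n → ℤ) (i j : ℕ) : ℤ :=
  if h : i < n ∧ j < n then A (⟨i, h.1⟩, ⟨j, h.2⟩) else 0

/-- The Gelfand–Tsetlin polytope of λ: top row equal to λ, interlacing inequalities,
and (as a normalization embedding it in a finite-dimensional space) zero at invalid positions. -/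
def GTPoly (n : ℕ) (lam : Fin n → ℝ) : Set (GTIdx n → ℝ) :=
  {A | (∀ j : Fin n, entryR A 0 j = lam j)
    ∧ (∀ i j : ℕ, i + 1 + j < n →
        entryR A (i+1) j ≤ entryR A i j ∧ entryR A i (j+1) ≤ entryR A (i+1) j)
    ∧ (∀ p : GTIdx n, ¬ GTValid n p → A p = 0)}

/-- Integer Gelfand–Tsetlin patterns with top row λ. -/
def GTPat (n : ℕ) (lam : Fin n → ℤ) : Set (GTIdx n → ℤ) :=
  {A | (∀ j : Fin n, entryZ A 0 j = lam j)
    ∧ (∀ i j : ℕ, i + 1 + j < n →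
        entryZ A (i+1) j ≤ entryZ A i j ∧ entryZ A i (j+1) ≤ entryZ A (i+1) j)
    ∧ (∀ p : GTIdx n, ¬ GTValid n p → A p = 0)}

/-- The weight of a pattern: μ_i = (sum of row i-1) - (sum of row i), 1-based;
here `i : Fin n` is 0-based, so `wtZ A i = (row i sum) - (row (i+1) sum)`. -/
def wtZ {n : ℕ} (A : GTIdx n → ℤ) (i : Fin n) : ℤ :=
  (∑ j : Fin n, entryZ A i j) - ∑ j : Fin n, entryZ A ((i : ℕ) + 1) j

noncomputable def wtR {n : ℕ} (A : GTIdx n → ℝ) (i : Fin n) : ℝ :=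
  (∑ j : Fin n, entryR A i j) - ∑ j : Fin n, entryR A ((i : ℕ) + 1) j

/-- Multiset of entries of row i. -/
noncomputable def rowM {n : ℕ} (A : GTIdx n → ℝ) (i : ℕ) : Multiset ℝ :=
  (Finset.univ.filter (fun j : Fin n => i + (j : ℕ) < n)).val.map (fun j => entryR A i (j : ℕ))

/-- Valid pattern positions (the nodes of the ambient graph T). -/
abbrev GTNode (n : ℕ) := {p : GTIdx n // GTValid n p}

/-- `upEdge n p q` : q is an upper neighbour of p in the triangular graph T,
i.e. q = (i-1, j) or (i-1, j+1) where p = (i, j). -/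
def upEdge (n : ℕ) (p q : GTIdx n) : Prop :=
  GTValid n p ∧ GTValid n q ∧ (q.1 : ℕ) + 1 = (p.1 : ℕ) ∧
    ((q.2 : ℕ) = (p.2 : ℕ) ∨ (q.2 : ℕ) = (p.2 : ℕ) + 1)

/-- The equality graph Γ_v of a point v of the GT polytope: nodes are valid positions,
edges join a position to an upper neighbour carrying an equal entry. -/
def Gamma (n : ℕ) (A : GTIdx n → ℝ) : SimpleGraph (GTNode n) where
  Adj p q := (upEdge n p.1 q.1 ∨ upEdge n q.1 p.1) ∧ A p.1 = A q.1
  symm := by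
    constructor
    rintro p q ⟨h, e⟩
    exact ⟨h.symm, e.symm⟩
  loopless := by
    constructor
    rintro p ⟨h | h, _⟩ <;> exact absurd h.2.2.1 (by omega)

/-- Tangent cone of a convex set P at a point v. -/
def tangentCone {E : Type*} [AddCommGroup E] [Module ℝ E] (P : Set E) (v : E) : Set E :=
  {y | ∃ x ∈ P, ∃ t : ℝ, 0 ≤ t ∧ y = v + t • (x - v)}

/-- The ray from v in direction ε. -/
def raySet {E : Type*} [AddCommGroup E] [Module ℝ E] (v ε : E) : Set E :=
  {y | ∃ t : ℝ, 0 ≤ t ∧ y = v + t • ε}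

/-- ε is the direction of an edge (one-dimensional extreme face) of the cone C with apex v. -/
def IsEdgeDir {E : Type*} [AddCommGroup E] [Module ℝ E] (C : Set E) (v ε : E) : Prop :=
  ε ≠ 0 ∧ IsExtreme ℝ C (raySet v ε)

/-- Direction-vector pattern for edges at a simplicial vertex: all nonzero coordinates lie
in rows a..b, one per row, and all are equal to c. -/
def simpDir (n : ℕ) (a b : ℕ) (c : ℝ) (ε : GTIdx n → ℝ) : Prop :=
  (∀ p : GTIdx n, ε p ≠ 0 → GTValid n p ∧ a ≤ (p.1 : ℕ) ∧ (p.1 : ℕ) ≤ b)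
  ∧ (∀ r : ℕ, a ≤ r → r ≤ b → ∃! p : GTIdx n, (p.1 : ℕ) = r ∧ ε p ≠ 0)
  ∧ (∀ p : GTIdx n, ε p ≠ 0 → ε p = c)

/-- A simplicial vertex: a vertex (extreme point) of the GT polytope whose equality graph
is acyclic. -/
def IsSimpVertex (n : ℕ) (lam : Fin n → ℝ) (A : GTIdx n → ℝ) : Prop :=
  A ∈ Set.extremePoints ℝ (GTPoly n lam) ∧ (Gamma n A).IsAcyclic

/- ### Rational functions, integer-point transforms, and the specialization F -/

/-- Field of rational functions in variables indexed by ι. -/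
abbrev KK (ι : Type) := FractionRing (MvPolynomial ι ℚ)

/-- The monomial t^u, u ∈ ℤ^ι, inside the rational function field. -/
noncomputable def tmon (ι : Type) [Fintype ι] (u : ι → ℤ) : KK ι :=
  ∏ i, (algebraMap (MvPolynomial ι ℚ) (KK ι) (MvPolynomial.X i)) ^ (u i)

/-- Indicator (as coefficient function of a formal Laurent series) of the integer points of S. -/
noncomputable def indSet {ι : Type} (S : Set (ι → ℝ)) : (ι → ℤ) → ℚ :=
  fun a => if (fun i => (a i : ℝ)) ∈ S then 1 else 0

/-- `Represents r f` : the rational function r is the integer-point transform of the formal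
Laurent series with coefficient function f, i.e. there is a nonzero Laurent polynomial q such
that q·f is a (finitely supported) Laurent polynomial g and r·q = g as rational functions. -/
noncomputable def Represents {ι : Type} [Fintype ι] (r : KK ι) (f : (ι → ℤ) → ℚ) : Prop :=
  ∃ q : (ι → ℤ) →₀ ℚ, q ≠ 0 ∧ ∃ g : (ι → ℤ) →₀ ℚ,
    (∀ a, g a = ∑ b ∈ q.support, q b * f (a - b)) ∧
    r * (∑ b ∈ q.support, (q b : KK ι) * tmon ι b)
      = ∑ a ∈ g.support, (g a : KK ι) * tmon ι a

/-- Field of rational functions in x_1, ..., x_n. -/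
abbrev Kx (n : ℕ) := FractionRing (MvPolynomial (Fin n) ℚ)

/-- The variable x_i. -/
noncomputable def xv (n : ℕ) (i : Fin n) : Kx n :=
  algebraMap (MvPolynomial (Fin n) ℚ) (Kx n) (MvPolynomial.X i)

/-- The substitution underlying F: t_{0,j} ↦ x_1 and t_{i,j} ↦ x_i⁻¹ x_{i+1} for i ≥ 1
(1-based x's; in our 0-based indexing t_{i,·} ↦ x_{i-1}⁻¹ · x_i for i ≥ 1, t_{0,·} ↦ x_0). -/
noncomputable def xsub (n : ℕ) (p : GTIdx n) : Kx n :=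
  if (p.1 : ℕ) = 0 then xv n p.1
  else (xv n (⟨(p.1 : ℕ) - 1, Nat.lt_of_le_of_lt (Nat.sub_le _ _) p.1.isLt⟩ : Fin n))⁻¹ * xv n p.1

/-- The specialization F on Laurent polynomials, as a ring homomorphism. -/
noncomputable def phiF (n : ℕ) : MvPolynomial (GTIdx n) ℚ →+* Kx n :=
  MvPolynomial.eval₂Hom (Rat.castHom (Kx n)) (xsub n)

/-- `FSpec n r y` : the specialization F of the rational function r (in the t-variables)
is defined and equal to y; i.e. r = p/q with F(q) ≠ 0 and y = F(p)/F(q). -/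
noncomputable def FSpec (n : ℕ) (r : KK (GTIdx n)) (y : Kx n) : Prop :=
  ∃ p q : MvPolynomial (GTIdx n) ℚ, phiF n q ≠ 0 ∧
    r * algebraMap (MvPolynomial (GTIdx n) ℚ) (KK (GTIdx n)) q
      = algebraMap (MvPolynomial (GTIdx n) ℚ) (KK (GTIdx n)) p ∧
    y * phiF n q = phiF n p

/-- The monomial e^μ = x^μ for an integral weight μ. -/
noncomputable def emon {n : ℕ} (mu : Fin n → ℤ) : Kx n := ∏ i, xv n i ^ mu i

/-- ρ = (n-1, n-2, ..., 0). -/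
def rhoW (n : ℕ) (i : Fin n) : ℤ := (n : ℤ) - 1 - (i : ℤ)

/-- The Schur (Laurent) polynomial of λ, defined by Weyl's character formula
(bialternant form). -/
noncomputable def schur (n : ℕ) (lam : Fin n → ℤ) : Kx n :=
  (∑ w : Equiv.Perm (Fin n), ((Equiv.Perm.sign w : ℤ) : Kx n)
      * ∏ i, xv n i ^ (lam (w⁻¹ i) + rhoW n (w⁻¹ i)))
  / (∑ w : Equiv.Perm (Fin n), ((Equiv.Perm.sign w : ℤ) : Kx n)
      * ∏ i, xv n i ^ (rhoW n (w⁻¹ i)))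

/-- The summand w(e^λ / Π_{i<j} (1 - x_j/x_i)) of Weyl's character formula. -/
noncomputable def weylTerm (n : ℕ) (lam : Fin n → ℤ) (w : Equiv.Perm (Fin n)) : Kx n :=
  (∏ i, xv n (w i) ^ lam i)
    / ∏ p ∈ Finset.univ.filter (fun p : Fin n × Fin n => p.1 < p.2),
        (1 - xv n (w p.2) / xv n (w p.1))

/-- Integer version of the edge-direction pattern. -/
def simpDirZ (n : ℕ) (a b : ℕ) (c : ℤ) (ε : GTIdx n → ℤ) : Prop :=
  (∀ p : GTIdx n, ε p ≠ 0 → GTValid n p ∧ a ≤ (p.1 : ℕ) ∧ (p.1 : ℕ) ≤ b)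
  ∧ (∀ r : ℕ, a ≤ r → r ≤ b → ∃! p : GTIdx n, (p.1 : ℕ) = r ∧ ε p ≠ 0)
  ∧ (∀ p : GTIdx n, ε p ≠ 0 → ε p = c)

/-- F(t^u): the specialization of the Laurent monomial t^u. -/
noncomputable def Fmon (n : ℕ) (u : GTIdx n → ℤ) : Kx n := ∏ p, xsub n p ^ u p

/-- A rational polytope in ℝ^m: a bounded set cut out by finitely many integral
linear inequalities. -/
def IsRatPolytope (m : ℕ) (P : Set (Fin m → ℝ)) : Prop :=
  Bornology.IsBounded P ∧ ∃ (k : ℕ) (a : Fin k → Fin m → ℤ) (b : Fin k → ℤ),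
    P = {x | ∀ i, ∑ j, (a i j : ℝ) * x j ≤ (b i : ℝ)}

/-- A rational polyhedron in ℝ^m. -/
def IsRatPolyhedron (m : ℕ) (P : Set (Fin m → ℝ)) : Prop :=
  ∃ (k : ℕ) (a : Fin k → Fin m → ℤ) (b : Fin k → ℤ),
    P = {x | ∀ i, ∑ j, (a i j : ℝ) * x j ≤ (b i : ℝ)}

/-- The cone C_Δ attached to a connected component Δ = c of the equality graph Γ_v:
vectors supported on the nodes of Δ, vanishing at the top (row-0) node of Δ, and
satisfying the interlacing inequalities along the edges of Δ. -/
noncomputable def compCone (n : ℕ) (A : GTIdx n → ℝ) (c : (Gamma n A).ConnectedComponent) :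
    Set (GTIdx n → ℝ) :=
  {x | (∀ p : GTIdx n,
          (¬ ∃ hp : GTValid n p, (Gamma n A).connectedComponentMk ⟨p, hp⟩ = c) → x p = 0)
    ∧ (∀ p : GTNode n, (Gamma n A).connectedComponentMk p = c → (p.1.1 : ℕ) = 0 → x p.1 = 0)
    ∧ (∀ p q : GTNode n, (Gamma n A).connectedComponentMk p = c →
        upEdge n p.1 q.1 → A p.1 = A q.1 →
        (((q.1.2 : ℕ) = (p.1.2 : ℕ)) → x p.1 ≤ x q.1) ∧
        (((q.1.2 : ℕ) = (p.1.2 : ℕ) + 1) → x q.1 ≤ x p.1))}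

/-! ### Auxiliary lemmas for statement7 -/

section Aux

open Finset SimpleGraph

variable {n : ℕ}

/-- Node constructor from ℕ coordinates. -/
def nd (n i j : ℕ) (h : i + j < n) : GTNode n :=
  ⟨(⟨i, by omega⟩, ⟨j, by omega⟩), by exact h⟩

@[simp] lemma nd_row (h : i + j < n) : (((nd n i j h).1.1 : Fin n) : ℕ) = i := rfl
@[simp] lemma nd_col (h : i + j < n) : (((nd n i j h).1.2 : Fin n) : ℕ) = j := rfl

lemma node_valid (p : GTNode n) : (p.1.1 : ℕ) + (p.1.2 : ℕ) < n := p.2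

lemma node_eq_iff {p q : GTNode n} :
    p = q ↔ ((p.1.1 : ℕ) = (q.1.1 : ℕ) ∧ (p.1.2 : ℕ) = (q.1.2 : ℕ)) := by
  constructor
  · rintro rfl; exact ⟨rfl, rfl⟩
  · rintro ⟨h1, h2⟩
    apply Subtype.ext
    exact Prod.ext (Fin.ext h1) (Fin.ext h2)

lemma entry_nd (A : GTIdx n → ℝ) (h : i + j < n) :
    A (nd n i j h).1 = entryR A i j := by
  rw [entryR, dif_pos ⟨by omega, by omega⟩]
  rfl

lemma entry_node (A : GTIdx n → ℝ) (p : GTNode n) :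
    A p.1 = entryR A (p.1.1 : ℕ) (p.1.2 : ℕ) := by
  rw [entryR, dif_pos ⟨(p.1.1).isLt, (p.1.2).isLt⟩]

lemma nd_eq_self (p : GTNode n) : nd n (p.1.1 : ℕ) (p.1.2 : ℕ) p.2 = p := by
  rw [node_eq_iff]; exact ⟨rfl, rfl⟩

end Aux
section Aux2

open Finset SimpleGraph

variable {n : ℕ} {A : GTIdx n → ℝ}

/-- Interlacing hypothesis abbreviation. -/
def Interlace (n : ℕ) (A : GTIdx n → ℝ) : Prop :=
  ∀ i j : ℕ, i + 1 + j < n →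
    entryR A (i+1) j ≤ entryR A i j ∧ entryR A i (j+1) ≤ entryR A (i+1) j

lemma row_step (hInt : Interlace n A) {i j : ℕ} (h : i + j + 1 < n) :
    entryR A i (j+1) ≤ entryR A i j := by
  have h2 := hInt i j (by omega)
  linarith [h2.1, h2.2]

lemma row_le (hInt : Interlace n A) {i j j' : ℕ} (h : i + j' < n) (hjj : j ≤ j') :
    entryR A i j' ≤ entryR A i j := by
  induction j' with
  | zero =>
    have : j = 0 := by omega
    subst this; rfl
  | succ k ih =>
    rcases Nat.lt_or_ge j (k+1) with hl | hl
    · exact le_trans (row_step hInt (by omega)) (ih (by omega) (by omega))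
    · have : j = k + 1 := by omega
      subst this; rfl

lemma dDown (hInt : Interlace n A) {i j : ℕ} (h : i + j + 1 < n)
    (e : entryR A i j = entryR A i (j+1)) :
    entryR A (i+1) j = entryR A i j ∧ entryR A (i+1) j = entryR A i (j+1) := by
  have h2 := hInt i j (by omega)
  constructor <;> linarith [h2.1, h2.2]

lemma dUp (hInt : Interlace n A) {i j : ℕ} (h : i + 1 + j + 1 < n)
    (e : entryR A (i+1) j = entryR A (i+1) (j+1)) :
    entryR A i (j+1) = entryR A (i+1) j ∧ entryR A i (j+1) = entryR A (i+1) (j+1) := by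
  have h1 := hInt i j (by omega)
  have h2 := hInt i (j+1) (by omega)
  constructor <;> linarith [h1.1, h1.2, h2.1, h2.2]

/-- Rows of adjacent nodes differ by one. -/
lemma adj_row {p q : GTNode n} (h : (Gamma n A).Adj p q) :
    ((p.1.1 : ℕ)) = (q.1.1 : ℕ) + 1 ∨ ((q.1.1 : ℕ)) = (p.1.1 : ℕ) + 1 := by
  rcases h.1 with h' | h'
  · exact Or.inl h'.2.2.1.symm
  · exact Or.inr h'.2.2.1.symm

lemma reach_eq {p q : GTNode n} (h : (Gamma n A).Reachable p q) : A p.1 = A q.1 := by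
  obtain ⟨w⟩ := h
  induction w with
  | nil => rfl
  | cons h w ih => exact h.2.trans ih

/-- adjacent via vertical up-edge -/
lemma adj_up0 {i j : ℕ} (h : i + 1 + j < n)
    (e : entryR A (i+1) j = entryR A i j) :
    (Gamma n A).Adj (nd n (i+1) j h) (nd n i j (by omega)) := by
  refine ⟨Or.inl ⟨by exact h, by show i + j < n; omega, rfl, Or.inl rfl⟩, ?_⟩
  exact (entry_nd A h).trans (e.trans (entry_nd A _).symm)

/-- adjacent via diagonal up-edge -/
lemma adj_up1 {i j : ℕ} (h : i + 1 + j < n)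
    (e : entryR A (i+1) j = entryR A i (j+1)) :
    (Gamma n A).Adj (nd n (i+1) j h) (nd n i (j+1) (by omega)) := by
  refine ⟨Or.inl ⟨by exact h, by show i + (j+1) < n; omega, rfl, Or.inr rfl⟩, ?_⟩
  exact (entry_nd A h).trans (e.trans (entry_nd A _).symm)

/-- Crossing lemma: a walk from above row r to at-or-below row r passes through row r. -/
lemma cross {p q : GTNode n} (w : (Gamma n A).Walk p q) (r : ℕ)
    (hq : (q.1.1 : ℕ) ≤ r) (hp : r < (p.1.1 : ℕ)) :
    ∃ z ∈ w.support, (z.1.1 : ℕ) = r := by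
  induction w with
  | nil => omega
  | @cons u m v h w ih =>
    rcases Nat.lt_or_ge r (m.1.1 : ℕ) with hm | hm
    · obtain ⟨z, hz, hzr⟩ := ih hq hm
      exact ⟨z, by simp [SimpleGraph.Walk.support_cons, hz], hzr⟩
    · have : (m.1.1 : ℕ) = r := by
        rcases adj_row h with h' | h' <;> omega
      exact ⟨m, by simp [SimpleGraph.Walk.support_cons], this⟩

end Aux2
section Aux3

open Finset SimpleGraph

variable {n : ℕ} {A : GTIdx n → ℝ}

lemma entry_add_smul (A x : GTIdx n → ℝ) (s : ℝ) (i j : ℕ) :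
    entryR (A + s • x) i j = entryR A i j + s * entryR x i j := by
  unfold entryR
  split
  · rfl
  · simp

/-- Every connected component of the equality graph of an extreme point contains a
row-0 node. -/
lemma F1 {lamR : Fin n → ℝ} (hA : A ∈ Set.extremePoints ℝ (GTPoly n lamR))
    (p : GTNode n) : ∃ q : GTNode n, (q.1.1 : ℕ) = 0 ∧ (Gamma n A).Reachable p q := by
  by_contra hcon
  push_neg at hcon
  classical
  obtain ⟨hmem, hext⟩ := hA
  obtain ⟨hTop, hInt, hZero⟩ := hmem
  set x : GTIdx n → ℝ := fun r =>
    if h : ∃ hr : GTValid n r, (Gamma n A).Reachable p ⟨r, hr⟩ then 1 else 0 with hx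
  have hx01 : ∀ r, x r = 0 ∨ x r = 1 := by
    intro r
    by_cases h : ∃ hr : GTValid n r, (Gamma n A).Reachable p ⟨r, hr⟩
    · exact Or.inr (dif_pos h)
    · exact Or.inl (dif_neg h)
  have hxp : x p.1 = 1 := dif_pos ⟨p.2, by exact SimpleGraph.Reachable.refl p⟩
  have hxinval : ∀ r, ¬ GTValid n r → x r = 0 := by
    intro r hr
    exact dif_neg (by rintro ⟨h, _⟩; exact hr h)
  have hxtop : ∀ r : GTIdx n, (r.1 : ℕ) = 0 → x r = 0 := by
    intro r hr
    apply dif_neg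
    rintro ⟨hv, hre⟩
    exact hcon ⟨r, hv⟩ hr hre
  have hcompat : ∀ (u v : GTNode n), upEdge n u.1 v.1 → A u.1 = A v.1 → x u.1 = x v.1 := by
    intro u v hup he
    have hadj : (Gamma n A).Adj u v := ⟨Or.inl hup, he⟩
    by_cases h : ∃ hr : GTValid n u.1, (Gamma n A).Reachable p ⟨u.1, hr⟩
    · rw [show x u.1 = 1 from dif_pos h]
      refine (show x v.1 = 1 from dif_pos ?_).symm
      obtain ⟨hr, hre⟩ := h
      exact ⟨v.2, (show (Gamma n A).Reachable p u from hre).trans hadj.reachable⟩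
    · rw [show x u.1 = 0 from dif_neg h]
      refine (show x v.1 = 0 from dif_neg ?_).symm
      rintro ⟨hr', hre'⟩
      exact h ⟨u.2, (show (Gamma n A).Reachable p v from hre').trans hadj.symm.reachable⟩
  -- the minimal positive gap
  set gap : ℕ × ℕ × Bool → ℝ := fun k =>
    if k.2.2 then entryR A k.1 k.2.1 - entryR A (k.1+1) k.2.1
    else entryR A (k.1+1) k.2.1 - entryR A k.1 (k.2.1+1) with hgap
  set K : Finset (ℕ × ℕ × Bool) :=
    ((range n) ×ˢ (range n) ×ˢ (univ : Finset Bool)).filter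
      (fun k => k.1+1+k.2.1 < n ∧ 0 < gap k) with hK
  set D : Finset ℝ := insert 1 (K.image gap) with hD
  set δ : ℝ := D.min' (insert_nonempty _ _) with hδ
  have hδpos : 0 < δ := by
    rw [hδ, Finset.lt_min'_iff]
    intro y hy
    rcases Finset.mem_insert.mp hy with h | h
    · rw [h]; norm_num
    · obtain ⟨k, hk, rfl⟩ := Finset.mem_image.mp h
      exact (Finset.mem_filter.mp hk).2.2
  have hδle : ∀ k : ℕ × ℕ × Bool, k.1+1+k.2.1 < n → 0 < gap k → δ ≤ gap k := by
    intro k hk hpos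
    apply Finset.min'_le
    refine Finset.mem_insert_of_mem (Finset.mem_image_of_mem _ ?_)
    refine Finset.mem_filter.mpr ⟨?_, hk, hpos⟩
    simp only [Finset.mem_product, Finset.mem_range, Finset.mem_univ, and_true]
    omega
  -- membership of perturbed points
  have hmemball : ∀ s : ℝ, |s| ≤ δ → A + s • x ∈ GTPoly n lamR := by
    intro s hs
    have hs1 := abs_le.mp hs
    refine ⟨?_, ?_, ?_⟩
    · intro j
      rw [entry_add_smul]
      have hxv : entryR x 0 (j : ℕ) = 0 := by
        rw [entryR, dif_pos ⟨Nat.lt_of_le_of_lt (Nat.zero_le _) j.isLt, j.isLt⟩]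
        exact hxtop _ rfl
      rw [hxv, mul_zero, add_zero]
      exact hTop j
    · intro i j hij
      rw [entry_add_smul, entry_add_smul, entry_add_smul]
      have h2 := hInt i j hij
      -- the three nodes
      have hvL : (i+1) + j < n := hij
      have hvU : i + j < n := by omega
      have hvR : i + (j+1) < n := by omega
      have exL : x (nd n (i+1) j hvL).1 = entryR x (i+1) j := entry_nd x hvL
      have exU : x (nd n i j hvU).1 = entryR x i j := entry_nd x hvU
      have exR : x (nd n i (j+1) hvR).1 = entryR x i (j+1) := entry_nd x hvR
      constructor
      · by_cases he : entryR A (i+1) j = entryR A i j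
        · have := hcompat (nd n (i+1) j hvL) (nd n i j hvU)
            ⟨hvL, by show i + j < n; omega, rfl, Or.inl rfl⟩
            (by exact (entry_nd A _).trans (he.trans (entry_nd A _).symm))
          have hxe : entryR x (i+1) j = entryR x i j := exL.symm.trans (this.trans exU)
          exact le_of_eq (by rw [hxe, he])
        · have hlt : entryR A (i+1) j < entryR A i j := lt_of_le_of_ne h2.1 he
          have hg := hδle (i, j, true) hij (by simp [hgap]; linarith)
          simp only [hgap, if_true] at hg
          rcases hx01 (nd n (i+1) j hvL).1 with h0 | h0 <;>
            rcases hx01 (nd n i j hvU).1 with h1 | h1 <;>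
            [skip; skip; skip; skip] <;>
            · rw [exL] at h0; rw [exU] at h1; rw [h0, h1]; nlinarith
      · by_cases he : entryR A (i+1) j = entryR A i (j+1)
        · have := hcompat (nd n (i+1) j hvL) (nd n i (j+1) hvR)
            ⟨hvL, by show i + (j+1) < n; omega, rfl, Or.inr rfl⟩
            (by exact (entry_nd A _).trans (he.trans (entry_nd A _).symm))
          have hxe : entryR x (i+1) j = entryR x i (j+1) := exL.symm.trans (this.trans exR)
          exact le_of_eq (by rw [hxe, he.symm])
        · have hlt : entryR A i (j+1) < entryR A (i+1) j :=
            lt_of_le_of_ne h2.2 (fun hh => he hh.symm)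
          have hg := hδle (i, j, false) hij (by simp [hgap]; linarith)
          simp [hgap] at hg
          rcases hx01 (nd n (i+1) j hvL).1 with h0 | h0 <;>
            rcases hx01 (nd n i (j+1) hvR).1 with h1 | h1 <;>
            [skip; skip; skip; skip] <;>
            · rw [exL] at h0; rw [exR] at h1; rw [h0, h1]; nlinarith
    · intro r hr
      have : (A + s • x) r = A r + s * x r := rfl
      rw [this, hZero r hr, hxinval r hr, mul_zero, add_zero]
  have h1 : A - δ • x ∈ GTPoly n lamR := by
    have := hmemball (-δ) (by rw [abs_neg, abs_of_nonneg hδpos.le])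
    have heq : A + (-δ) • x = A - δ • x := by module
    rwa [heq] at this
  have h2 : A + δ • x ∈ GTPoly n lamR := hmemball δ (by rw [abs_of_nonneg hδpos.le])
  have hseg : A ∈ openSegment ℝ (A - δ • x) (A + δ • x) := by
    refine ⟨1/2, 1/2, by norm_num, by norm_num, by norm_num, ?_⟩
    module
  have hh := hext h1 h2 hseg
  have := congrFun hh p.1
  have hxx : (A - δ • x) p.1 = A p.1 - δ * x p.1 := rfl
  rw [hxx, hxp] at this
  linarith [hδpos, this]

end Aux3
section Aux4

open Finset SimpleGraph

variable {n : ℕ} {A : GTIdx n → ℝ}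

lemma row_eq_step (hInt : Interlace n A) {i j j' : ℕ} (h : i + j' < n) (hjj : j < j')
    (e : entryR A i j = entryR A i j') : entryR A i j = entryR A i (j+1) := by
  have h1 : entryR A i (j+1) ≤ entryR A i j := row_step hInt (by omega)
  have h2 : entryR A i j' ≤ entryR A i (j+1) := row_le hInt h (by omega)
  linarith [e.ge, e.le]

lemma pair_left (hInt : Interlace n A) {i j j' : ℕ} (hj' : i + j' < n) (hlt : j' < j)
    (e : entryR A i j = entryR A i j') (hjn : i + j < n) :
    entryR A i (j-1) = entryR A i j := by
  have h1 : entryR A i j ≤ entryR A i (j-1) := row_le hInt hjn (by omega)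
  have h2 : entryR A i (j-1) ≤ entryR A i j' := row_le hInt (by omega) (by omega)
  linarith [e.ge, e.le]

/-- At an extreme point, every non-top node carries at least one tight up-inequality. -/
lemma ext1 {lamR : Fin n → ℝ} (hA : A ∈ Set.extremePoints ℝ (GTPoly n lamR))
    (i j : ℕ) (hij : i + 1 + j < n) :
    entryR A (i+1) j = entryR A i j ∨ entryR A (i+1) j = entryR A i (j+1) := by
  have hInt : Interlace n A := hA.1.2.1
  by_contra hcon
  push_neg at hcon
  obtain ⟨h1, h2⟩ := hcon
  set p : GTNode n := nd n (i+1) j hij with hpdef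
  have hp1 : (p.1.1 : ℕ) = i + 1 := rfl
  have hAp : A p.1 = entryR A (i+1) j := entry_nd A hij
  obtain ⟨q, hq0, hre⟩ := F1 hA p
  obtain ⟨w0⟩ := hre
  obtain ⟨w, hw⟩ := w0.toPath
  cases w with
  | nil => rw [hp1] at hq0; omega
  | @cons _ m _ h w' =>
    rcases h.1 with hup | hup
    · -- m is an upper neighbour of p
      have hm1 : (m.1.1 : ℕ) = i := by have := hup.2.2.1; omega
      have hAm : A m.1 = entryR A i (m.1.2 : ℕ) := by
        have e0 := entry_node A m
        rwa [hm1] at e0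
      rcases hup.2.2.2 with hc | hc
      · have hcj : (m.1.2 : ℕ) = j := hc
        exact h1 (by rw [← hAp, ← hcj, ← hAm]; exact h.2)
      · have hcj : (m.1.2 : ℕ) = j + 1 := hc
        exact h2 (by rw [← hAp, ← hcj, ← hAm]; exact h.2)
    · -- p is an upper neighbour of m; the walk must cross row i+1 again
      have hm1 : (m.1.1 : ℕ) = i + 2 := by have := hup.2.2.1; rw [hp1] at this; omega
      obtain ⟨z, hzsup, hzrow⟩ := cross w' (i+1) (by omega) (by omega)
      have hnodup := hw.support_nodup
      rw [SimpleGraph.Walk.support_cons] at hnodup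
      have hzp : z ≠ p := by
        intro he
        exact (List.nodup_cons.mp hnodup).1 (he ▸ hzsup)
      have hrez : (Gamma n A).Reachable p z :=
        ⟨(SimpleGraph.Walk.cons h w').takeUntil z
          (by rw [SimpleGraph.Walk.support_cons]; exact List.mem_cons_of_mem _ hzsup)⟩
      have hAez : entryR A (i+1) j = entryR A (i+1) (z.1.2 : ℕ) := by
        have e0 := entry_node A z
        rw [hzrow] at e0
        rw [← hAp, reach_eq hrez, e0]
      have hzj : (z.1.2 : ℕ) ≠ j := by
        intro he
        exact hzp (node_eq_iff.mpr ⟨by rw [hzrow, hp1], by rw [he]; rfl⟩)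
      have hzv : (i+1) + (z.1.2 : ℕ) < n := by
        have := node_valid z; omega
      rcases Nat.lt_or_ge j (z.1.2 : ℕ) with hlt | hge
      · have e := row_eq_step hInt hzv hlt hAez
        have := (dUp hInt (by omega) e).1
        exact h2 this.symm
      · have hlt : (z.1.2 : ℕ) < j := by omega
        have e := pair_left hInt hzv hlt hAez (by omega)
        have hj1 : j - 1 + 1 = j := by omega
        have := (dUp hInt (i := i) (j := j - 1) (by omega) (by rw [hj1]; exact e)).2
        rw [hj1] at this
        exact h1 this.symm

/-- From two distinct same-row nodes in a component: a doubly-tight lower pair. -/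
lemma both_of_notH (hInt : Interlace n A) {p q : GTNode n}
    (hre : (Gamma n A).Reachable p q) (hrow : (p.1.1 : ℕ) = (q.1.1 : ℕ)) (hne : p ≠ q) :
    ∃ i j : ℕ, i + 1 + j < n ∧ (p.1.1 : ℕ) = i ∧
      entryR A i j = entryR A i (j+1) ∧
      entryR A (i+1) j = entryR A i j ∧ entryR A (i+1) j = entryR A i (j+1) := by
  have hcolne : (p.1.2 : ℕ) ≠ (q.1.2 : ℕ) := by
    intro he; exact hne (node_eq_iff.mpr ⟨hrow, he⟩)
  have e1 := entry_node A p
  have e2 := entry_node A q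
  rw [← hrow] at e2
  have hAe : entryR A (p.1.1 : ℕ) (p.1.2 : ℕ) = entryR A (p.1.1 : ℕ) (q.1.2 : ℕ) := by
    rw [← e1, ← e2]; exact reach_eq hre
  have hvp : (p.1.1 : ℕ) + (p.1.2 : ℕ) < n := node_valid p
  have hvq : (p.1.1 : ℕ) + (q.1.2 : ℕ) < n := by have := node_valid q; omega
  rcases Nat.lt_or_ge (p.1.2 : ℕ) (q.1.2 : ℕ) with hlt | hge
  · have e := row_eq_step hInt hvq hlt hAe
    exact ⟨(p.1.1 : ℕ), _, by omega, rfl, e, dDown hInt (by omega) e⟩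
  · have hlt : (q.1.2 : ℕ) < (p.1.2 : ℕ) := by omega
    have e := row_eq_step hInt hvp hlt hAe.symm
    exact ⟨(p.1.1 : ℕ), _, by omega, rfl, e, dDown hInt (by omega) e⟩

/-- Equal adjacent top-row entries contradict regularity. -/
lemma top_row_ne {lam : Fin n → ℤ} (hreg : ∀ i j : Fin n, i < j → lam j < lam i)
    (hTop : ∀ j : Fin n, entryR A 0 (j : ℕ) = (lam j : ℝ)) {j : ℕ} (h : 0 + 1 + j < n)
    (e : entryR A 0 j = entryR A 0 (j+1)) : False := by
  have hj : j < n := by omega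
  have hj1 : j + 1 < n := by omega
  have e1 := hTop ⟨j, hj⟩
  have e2 := hTop ⟨j+1, hj1⟩
  simp only at e1 e2
  rw [e1, e2] at e
  have : lam ⟨j+1, hj1⟩ < lam ⟨j, hj⟩ := hreg _ _ (by simp [Fin.lt_def])
  exact absurd (Int.cast_injective e) (by omega)

end Aux4
section Aux5

open Finset SimpleGraph

variable {n : ℕ} {A : GTIdx n → ℝ}

/-- A cycle through `v` furnishes two distinct neighbours of `v` on the cycle. -/
lemma cycle_two_neighbors {V : Type*} {G : SimpleGraph V} {v : V} (c : G.Walk v v)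
    (hc : c.IsCycle) :
    ∃ a b, a ≠ b ∧ G.Adj v a ∧ G.Adj v b ∧ a ∈ c.support ∧ b ∈ c.support := by
  have hlen3 := hc.three_le_length
  cases c with
  | nil => exact absurd rfl hc.ne_nil
  | @cons _ m _ h q =>
    rw [SimpleGraph.Walk.cons_isCycle_iff] at hc
    obtain ⟨hq, hedge⟩ := hc
    have hlen : 1 ≤ q.length := by
      simp only [SimpleGraph.Walk.length_cons] at hlen3; omega
    have hrnil : ¬ q.reverse.Nil := by
      rw [SimpleGraph.Walk.not_nil_iff_lt_length, SimpleGraph.Walk.length_reverse]; omega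
    have hadjb : G.Adj v (q.reverse.getVert 1) := q.reverse.adj_snd hrnil
    have hbmem : q.reverse.getVert 1 ∈ q.reverse.support := by
      rw [SimpleGraph.Walk.mem_support_iff_exists_getVert]
      exact ⟨1, rfl, by rw [SimpleGraph.Walk.length_reverse]; omega⟩
    have hbedge : s(v, q.reverse.getVert 1) ∈ q.reverse.edges := by
      have h0 := q.reverse.cons_tail_eq hrnil
      have h1 : s(v, q.reverse.getVert 1) ∈
          (SimpleGraph.Walk.cons (q.reverse.adj_snd hrnil) q.reverse.tail).edges := by
        rw [SimpleGraph.Walk.edges_cons]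
        exact List.mem_cons_self
      rwa [h0] at h1
    have hanb : m ≠ q.reverse.getVert 1 := by
      intro he
      apply hedge
      rw [← he] at hbedge
      rwa [SimpleGraph.Walk.edges_reverse, List.mem_reverse] at hbedge
    refine ⟨m, q.reverse.getVert 1, hanb, h, hadjb, ?_, ?_⟩
    · rw [SimpleGraph.Walk.support_cons]
      exact List.mem_cons_of_mem _ q.start_mem_support
    · rw [SimpleGraph.Walk.support_reverse, List.mem_reverse] at hbmem
      rw [SimpleGraph.Walk.support_cons]
      exact List.mem_cons_of_mem _ hbmem

/-- If every component of Γ has at most one node per row then Γ is acyclic. -/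
lemma H_to_acyclic
    (HP : ∀ p q : GTNode n, (Gamma n A).Reachable p q → (p.1.1 : ℕ) = (q.1.1 : ℕ) → p = q) :
    (Gamma n A).IsAcyclic := by
  intro v c hc
  obtain ⟨p, hp, hmax⟩ : ∃ p ∈ c.support.toFinset,
      ∀ z ∈ c.support.toFinset, (z.1.1 : ℕ) ≤ (p.1.1 : ℕ) := by
    apply Finset.exists_max_image
    exact ⟨v, List.mem_toFinset.mpr c.start_mem_support⟩
  rw [List.mem_toFinset] at hp
  have hmax' : ∀ z ∈ c.support, (z.1.1 : ℕ) ≤ (p.1.1 : ℕ) := by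
    intro z hz; exact hmax z (List.mem_toFinset.mpr hz)
  have hc' := hc.rotate hp
  have hsup : ∀ z ∈ (c.rotate p hp).support, z ∈ c.support := by
    intro z hz
    have hperm := SimpleGraph.Walk.support_rotate c p hp
    rw [SimpleGraph.Walk.support_eq_cons (c.rotate p hp)] at hz
    rcases List.mem_cons.mp hz with rfl | hz'
    · exact hp
    · have := hperm.mem_iff.mp hz'
      rw [SimpleGraph.Walk.support_eq_cons c]
      exact List.mem_cons_of_mem _ this
  obtain ⟨a, b, hab, ha, hb, hamem, hbmem⟩ := cycle_two_neighbors (c.rotate p hp) hc'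
  have hra : (a.1.1 : ℕ) + 1 = (p.1.1 : ℕ) := by
    rcases adj_row ha with h' | h'
    · omega
    · exact absurd (hmax' a (hsup a hamem)) (by omega)
  have hrb : (b.1.1 : ℕ) + 1 = (p.1.1 : ℕ) := by
    rcases adj_row hb with h' | h'
    · omega
    · exact absurd (hmax' b (hsup b hbmem)) (by omega)
  exact hab (HP a b (ha.symm.reachable.trans hb.reachable) (by omega))

/-- node inequality from distinct coordinates -/
lemma nd_ne {i j i' j' : ℕ} (h : i + j < n) (h' : i' + j' < n) (hne : i ≠ i' ∨ j ≠ j') :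
    nd n i j h ≠ nd n i' j' h' := by
  intro he
  rw [node_eq_iff] at he
  simp only [nd_row, nd_col] at he
  omega

/-- An equal adjacent pair in a row `i ≥ 1` yields two distinct paths, hence a cycle. -/
lemma notAcyclic_of_pair (hInt : Interlace n A) {i j : ℕ} (hi : 1 ≤ i) (h : i + j + 1 < n)
    (e : entryR A i j = entryR A i (j+1)) : ¬ (Gamma n A).IsAcyclic := by
  cases i with
  | zero => omega
  | succ k =>
    intro hac
    have hD := dDown hInt h e
    have hU := dUp hInt (by omega) e
    have vP : (k+1) + j < n := by omega
    have vQ : (k+1) + (j+1) < n := by omega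
    have vLo : (k+2) + j < n := by omega
    have vHi : k + (j+1) < n := by omega
    have adj1 : (Gamma n A).Adj (nd n (k+2) j vLo) (nd n (k+1) j vP) :=
      adj_up0 (by omega) hD.1
    have adj2 : (Gamma n A).Adj (nd n (k+2) j vLo) (nd n (k+1) (j+1) vQ) :=
      adj_up1 (by omega) hD.2
    have adj3 : (Gamma n A).Adj (nd n (k+1) j vP) (nd n k (j+1) vHi) :=
      adj_up1 (by omega) hU.1.symm
    have adj4 : (Gamma n A).Adj (nd n (k+1) (j+1) vQ) (nd n k (j+1) vHi) :=
      adj_up0 (by omega) hU.2.symm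
    have hw1 : (SimpleGraph.Walk.cons adj1.symm
        (SimpleGraph.Walk.cons adj2 SimpleGraph.Walk.nil)).IsPath := by
      rw [SimpleGraph.Walk.isPath_def]
      simp only [SimpleGraph.Walk.support_cons, SimpleGraph.Walk.support_nil]
      refine List.nodup_cons.mpr ⟨?_, List.nodup_cons.mpr ⟨?_, List.nodup_singleton _⟩⟩
      · intro hmem
        rcases List.mem_cons.mp hmem with he' | he'
        · exact nd_ne vP vLo (Or.inl (by omega)) he'
        · rw [List.mem_singleton] at he'
          exact nd_ne vP vQ (Or.inr (by omega)) he'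
      · rw [List.mem_singleton]
        exact nd_ne vLo vQ (Or.inl (by omega))
    have hw2 : (SimpleGraph.Walk.cons adj3
        (SimpleGraph.Walk.cons adj4.symm SimpleGraph.Walk.nil)).IsPath := by
      rw [SimpleGraph.Walk.isPath_def]
      simp only [SimpleGraph.Walk.support_cons, SimpleGraph.Walk.support_nil]
      refine List.nodup_cons.mpr ⟨?_, List.nodup_cons.mpr ⟨?_, List.nodup_singleton _⟩⟩
      · intro hmem
        rcases List.mem_cons.mp hmem with he' | he'
        · exact nd_ne vP vHi (Or.inl (by omega)) he'
        · rw [List.mem_singleton] at he'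
          exact nd_ne vP vQ (Or.inr (by omega)) he'
      · rw [List.mem_singleton]
        exact nd_ne vHi vQ (Or.inl (by omega))
    have := SimpleGraph.isAcyclic_iff_path_unique.mp hac ⟨_, hw1⟩ ⟨_, hw2⟩
    have hveq := Subtype.ext_iff.mp this
    have hsup := congrArg SimpleGraph.Walk.support hveq
    simp only [SimpleGraph.Walk.support_cons, SimpleGraph.Walk.support_nil] at hsup
    have h2 := (List.cons.inj hsup).2
    have h3 := (List.cons.inj h2).1
    exact nd_ne vLo vHi (Or.inl (by omega)) h3

end Aux5
section Aux6

open Finset SimpleGraph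

variable {n : ℕ} {A : GTIdx n → ℝ}

/-- The finite set of tight inequalities. -/
noncomputable def TTf (n : ℕ) (A : GTIdx n → ℝ) : Finset (ℕ × ℕ × Bool) :=
  ((range n) ×ˢ ((range n) ×ˢ (univ : Finset Bool))).filter
    (fun x => x.1 + 1 + x.2.1 < n ∧
      (if x.2.2 then entryR A (x.1 + 1) x.2.1 = entryR A x.1 x.2.1
       else entryR A (x.1 + 1) x.2.1 = entryR A x.1 (x.2.1 + 1)))

/-- The finite set of non-top positions. -/
noncomputable def Lf (n : ℕ) : Finset (ℕ × ℕ) :=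
  ((range n) ×ˢ (range n)).filter (fun k => k.1 + 1 + k.2 < n)

lemma mem_TTf {x : ℕ × ℕ × Bool} : x ∈ TTf n A ↔ (x.1 + 1 + x.2.1 < n ∧
    (if x.2.2 then entryR A (x.1 + 1) x.2.1 = entryR A x.1 x.2.1
     else entryR A (x.1 + 1) x.2.1 = entryR A x.1 (x.2.1 + 1))) := by
  rw [TTf, Finset.mem_filter]
  constructor
  · exact fun h => h.2
  · intro h
    refine ⟨?_, h⟩
    simp only [Finset.mem_product, Finset.mem_range, Finset.mem_univ, and_true]
    omega

lemma mem_Lf {k : ℕ × ℕ} : k ∈ Lf n ↔ k.1 + 1 + k.2 < n := by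
  rw [Lf, Finset.mem_filter]
  constructor
  · exact fun h => h.2
  · intro h
    refine ⟨?_, h⟩
    simp only [Finset.mem_product, Finset.mem_range]
    omega

lemma ncard_TTf :
    ({x : ℕ × ℕ × Bool | x.1 + 1 + x.2.1 < n ∧
        (if x.2.2 then entryR A (x.1 + 1) x.2.1 = entryR A x.1 x.2.1
         else entryR A (x.1 + 1) x.2.1 = entryR A x.1 (x.2.1 + 1))}.ncard) = (TTf n A).card := by
  rw [show {x : ℕ × ℕ × Bool | x.1 + 1 + x.2.1 < n ∧
        (if x.2.2 then entryR A (x.1 + 1) x.2.1 = entryR A x.1 x.2.1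
         else entryR A (x.1 + 1) x.2.1 = entryR A x.1 (x.2.1 + 1))} = (↑(TTf n A) : Set (ℕ × ℕ × Bool))
      from by
        ext x
        rw [Finset.mem_coe, mem_TTf]
        rfl]
  exact Set.ncard_coe_finset _

lemma card_Lf : (Lf n).card = n * (n + 1) / 2 - n := by
  have h1 : (Lf n).card = ∑ i ∈ range n, ((Lf n).filter (fun x => x.1 = i)).card := by
    apply Finset.card_eq_sum_card_fiberwise
    intro x hx
    rw [Finset.mem_coe, mem_Lf] at hx
    rw [Finset.mem_coe, Finset.mem_range]
    omega
  have h2 : ∀ i, ((Lf n).filter (fun x => x.1 = i)).card = n - 1 - i := by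
    intro i
    have : (Lf n).filter (fun x => x.1 = i) = (range (n - 1 - i)).image (fun j => (i, j)) := by
      ext ⟨a, b⟩
      rw [Finset.mem_filter, mem_Lf, Finset.mem_image]
      constructor
      · rintro ⟨hab, rfl⟩
        exact ⟨b, by rw [Finset.mem_range]; omega, rfl⟩
      · rintro ⟨j, hj, he⟩
        rw [Finset.mem_range] at hj
        obtain ⟨rfl, rfl⟩ := Prod.mk.inj he
        exact ⟨by omega, rfl⟩
    rw [this, Finset.card_image_of_injective _ (fun a b h => (Prod.mk.inj h).2),
      Finset.card_range]
  rw [h1]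
  simp only [h2]
  have h3 : ∑ i ∈ range n, (n - 1 - i) = ∑ i ∈ range n, i := by
    exact Finset.sum_range_reflect (fun i => i) n
  rw [h3, Finset.sum_range_id]
  have h4 : n * (n + 1) = n * (n - 1) + 2 * n := by
    cases n with
    | zero => rfl
    | succ m => rw [Nat.add_sub_cancel]; ring
  have h5 : n * (n + 1) / 2 = n * (n - 1) / 2 + n := by
    rw [h4, Nat.add_mul_div_left _ _ (by norm_num : (0:ℕ) < 2)]
  omega

/-- not both inequalities tight, given one-node-per-row-per-component -/
lemma not_both_of_HP
    (HP : ∀ p q : GTNode n, (Gamma n A).Reachable p q → (p.1.1 : ℕ) = (q.1.1 : ℕ) → p = q)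
    {i j : ℕ} (hij : i + 1 + j < n) :
    ¬ (entryR A (i+1) j = entryR A i j ∧ entryR A (i+1) j = entryR A i (j+1)) := by
  rintro ⟨e1, e2⟩
  have a1 := adj_up0 hij e1
  have a2 := adj_up1 hij e2
  have := HP _ _ (a1.symm.reachable.trans a2.reachable) rfl
  exact nd_ne _ _ (Or.inr (by omega)) this

lemma card_of_HP {lamR : Fin n → ℝ} (hA : A ∈ Set.extremePoints ℝ (GTPoly n lamR))
    (HP : ∀ p q : GTNode n, (Gamma n A).Reachable p q → (p.1.1 : ℕ) = (q.1.1 : ℕ) → p = q) :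
    (TTf n A).card = (Lf n).card := by
  classical
  apply Finset.card_bij' (fun a _ => (a.1, a.2.1))
    (fun k _ => (k.1, k.2, if entryR A (k.1+1) k.2 = entryR A k.1 k.2 then true else false))
  · intro a ha
    rw [mem_TTf] at ha
    rw [mem_Lf]
    exact ha.1
  · intro k hk
    rw [mem_Lf] at hk
    rw [mem_TTf]
    refine ⟨hk, ?_⟩
    by_cases h : entryR A (k.1+1) k.2 = entryR A k.1 k.2
    · simp [h]
    · simp only [h, if_false]
      rcases ext1 hA k.1 k.2 hk with h' | h'
      · exact absurd h' h
      · simpa using h'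
  · rintro ⟨a, b, c⟩ ha
    rw [mem_TTf] at ha
    obtain ⟨hab, hcond⟩ := ha
    simp only
    cases c with
    | true =>
      simp only [if_true] at hcond
      rw [if_pos hcond]
    | false =>
      simp only [if_false] at hcond
      rw [if_neg]
      intro h'
      exact not_both_of_HP HP hab ⟨h', hcond⟩
  · intro k hk
    rfl

lemma HP_of_card {lamR : Fin n → ℝ} (hA : A ∈ Set.extremePoints ℝ (GTPoly n lamR))
    (hcard : (TTf n A).card = (Lf n).card) :
    ∀ p q : GTNode n, (Gamma n A).Reachable p q → (p.1.1 : ℕ) = (q.1.1 : ℕ) → p = q := by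
  classical
  have hInt : Interlace n A := hA.1.2.1
  by_contra hcon
  push_neg at hcon
  obtain ⟨p, q, hre, hrow, hne⟩ := hcon
  obtain ⟨i, j, hij, _, _, e1, e2⟩ := both_of_notH hInt hre hrow hne
  -- the section of the projection
  set σ : ℕ × ℕ → ℕ × ℕ × Bool :=
    fun k => (k.1, k.2, if entryR A (k.1+1) k.2 = entryR A k.1 k.2 then true else false) with hσ
  have hσTT : ∀ k ∈ Lf n, σ k ∈ TTf n A := by
    intro k hk
    rw [mem_Lf] at hk
    rw [mem_TTf]
    refine ⟨hk, ?_⟩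
    by_cases h : entryR A (k.1+1) k.2 = entryR A k.1 k.2
    · simp [hσ, h]
    · simp only [hσ, h, if_false]
      rcases ext1 hA k.1 k.2 hk with h' | h'
      · exact absurd h' h
      · simpa using h'
  have hinj : Set.InjOn σ (Lf n) := by
    intro a _ b _ he
    have h1 := congrArg Prod.fst he
    have h2 := congrArg (fun z => z.2.1) he
    simp only [hσ] at h1 h2
    exact Prod.ext h1 h2
  set y₀ : ℕ × ℕ × Bool := (i, j, false) with hy
  have hy₀TT : y₀ ∈ TTf n A := by
    rw [mem_TTf]
    refine ⟨hij, ?_⟩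
    simpa using e2
  have hy₀notin : y₀ ∉ (Lf n).image σ := by
    rw [Finset.mem_image]
    rintro ⟨k, hk, he⟩
    have h1 := congrArg Prod.fst he
    have h2 := congrArg (fun z => z.2.1) he
    have h3 := congrArg (fun z => z.2.2) he
    simp only [hσ, hy] at h1 h2 h3
    rw [h1, h2, if_pos e1] at h3
    exact absurd h3 (by simp)
  have hsub : insert y₀ ((Lf n).image σ) ⊆ TTf n A := by
    intro z hz
    rcases Finset.mem_insert.mp hz with rfl | hz'
    · exact hy₀TT
    · obtain ⟨k, hk, rfl⟩ := Finset.mem_image.mp hz'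
      exact hσTT k hk
  have hle := Finset.card_le_card hsub
  rw [Finset.card_insert_of_notMem hy₀notin, Finset.card_image_of_injOn hinj] at hle
  omega

end Aux6
/-- a vertex v of GT_λ (λ regular) lies on exactly dim GT_λ = n(n+1)/2 - n
facets (equivalently, exactly that many defining inequalities are tight at v) iff Γ_v is
acyclic, iff no connected component of Γ_v contains two nodes from the same row. -/
theorem statement7 (n : ℕ) (lam : Fin n → ℤ)
    (hreg : ∀ i j : Fin n, i < j → lam j < lam i)
    (A : GTIdx n → ℝ)
    (hA : A ∈ Set.extremePoints ℝ (GTPoly n (fun i => (lam i : ℝ)))) :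
    ({x : ℕ × ℕ × Bool | x.1 + 1 + x.2.1 < n ∧
        (if x.2.2 then entryR A (x.1 + 1) x.2.1 = entryR A x.1 x.2.1
         else entryR A (x.1 + 1) x.2.1 = entryR A x.1 (x.2.1 + 1))}.ncard
        = n * (n + 1) / 2 - n ↔ (Gamma n A).IsAcyclic) ∧
    ((Gamma n A).IsAcyclic ↔
      ∀ p q : GTNode n, (Gamma n A).Reachable p q → p.1.1 = q.1.1 → p = q) := by
  classical
  have hInt : Interlace n A := hA.1.2.1
  have hTop : ∀ j : Fin n, entryR A 0 (j : ℕ) = ((lam j : ℤ) : ℝ) := hA.1.1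
  have hacHP : (Gamma n A).IsAcyclic →
      ∀ p q : GTNode n, (Gamma n A).Reachable p q → (p.1.1 : ℕ) = (q.1.1 : ℕ) → p = q := by
    intro hac p q hre hrow
    by_contra hne
    obtain ⟨i, j, hij, hpi, e, _, _⟩ := both_of_notH hInt hre hrow hne
    rcases Nat.eq_zero_or_pos i with rfl | hi
    · exact top_row_ne hreg hTop hij e
    · exact notAcyclic_of_pair hInt hi (by omega) e hac
  constructor
  · rw [ncard_TTf]
    constructor
    · intro hcard
      have hc2 : (TTf n A).card = (Lf n).card := by rw [hcard, card_Lf]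
      exact H_to_acyclic (HP_of_card hA hc2)
    · intro hac
      rw [card_of_HP hA (hacHP hac), card_Lf]
  · constructor
    · intro hac p q hre hrow
      exact hacHP hac p q hre (congrArg Fin.val hrow)
    · intro H
      exact H_to_acyclic (fun p q hre hrow => H p q hre (Fin.ext hrow))
end

section
/- For a regular dominant weight λ, the Gelfand–Tsetlin polytope GT_λ has exactly n! simplicial vertices, and the map sending a simplicial vertex v to the permutation w_v ∈ S_n (defined by: the element deleted when passing from the multiset of entries of row i to that of row i+1 of v is λ_{w_v^{-1}(i+1)}) is a bijection between simplicial vertices and S_n. -/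
open scoped BigOperators Classical

section AuxSimp
open SimpleGraph


lemma lastEdge_mem {V : Type*} {G : SimpleGraph V} :
    ∀ {a b : V} (w : G.Walk a b), w.length ≠ 0 →
      s(w.getVert (w.length - 1), b) ∈ w.edges := by
  intro a b w
  induction w with
  | nil => simp
  | @cons a x b h q ih =>
    intro _
    by_cases hq : q.length = 0
    · have hxb : x = b := q.eq_of_length_eq_zero hq
      subst hxb
      simp [Walk.getVert_zero, hq]
    · have hlen : (Walk.cons h q).length - 1 = q.length := by
        simp [Walk.length_cons]
      rw [hlen, Walk.getVert_cons q h (by omega)]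
      simp only [Walk.edges_cons, List.mem_cons]
      exact Or.inr (ih hq)

lemma acyclic_of_levels {V : Type*} (G : SimpleGraph V) (g : V → ℕ)
    (hstep : ∀ a b, G.Adj a b → g a = g b + 1 ∨ g b = g a + 1)
    (huniq : ∀ u a b, G.Adj u a → G.Adj u b → g a = g b → a = b) :
    G.IsAcyclic := by
  classical
  intro v c hc
  -- find a vertex of maximal level on the cycle
  obtain ⟨u, hum⟩ : ∃ u, u ∈ List.argmax g c.support := by
    cases hne : List.argmax g c.support with
    | none =>
      exfalso
      have := List.argmax_eq_none.mp hne
      simp [Walk.support_ne_nil] at this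
    | some u => exact ⟨u, by simp [hne]⟩
  have humem : u ∈ c.support := List.argmax_mem hum
  have hmax : ∀ a ∈ c.support, g a ≤ g u := fun a ha => List.le_of_mem_argmax ha hum
  set c' := c.rotate u humem with hc'
  have hcyc : c'.IsCycle := hc.rotate humem
  have hmax' : ∀ a ∈ c'.support, g a ≤ g u := by
    intro a ha
    rcases (Walk.mem_support_iff (p := c')).mp ha with rfl | hatail
    · exact le_rfl
    · have : a ∈ c.support.tail := (Walk.support_rotate c u humem).mem_iff.mp hatail
      exact hmax a (List.mem_of_mem_tail this)
  have hlen3 : 3 ≤ c'.length := hcyc.three_le_length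
  set x := c'.getVert 1 with hx
  set y := c'.getVert (c'.length - 1) with hy
  have hadjux : G.Adj u x := by
    have := c'.adj_getVert_succ (i := 0) (by omega)
    simpa using this
  have hadjyu : G.Adj y u := by
    have := c'.adj_getVert_succ (i := c'.length - 1) (by omega)
    have h2 : c'.length - 1 + 1 = c'.length := by omega
    rw [h2] at this
    simpa [Walk.getVert_length] using this
  have hxs : x ∈ c'.support := Walk.mem_support_iff_exists_getVert.mpr ⟨1, rfl, by omega⟩
  have hys : y ∈ c'.support := Walk.mem_support_iff_exists_getVert.mpr ⟨c'.length - 1, rfl, by omega⟩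
  have hgx : g u = g x + 1 := by
    rcases hstep u x hadjux with h | h
    · exact h
    · exfalso; have := hmax' x hxs; omega
  have hgy : g u = g y + 1 := by
    rcases hstep u y hadjyu.symm with h | h
    · exact h
    · exfalso; have := hmax' y hys; omega
  have hxy : x = y := huniq u x y hadjux hadjyu.symm (by omega)
  -- now derive a contradiction: first and last edges coincide
  cases hcc : c' with
  | nil => rw [hcc] at hlen3; simp at hlen3
  | @cons _ x0 _ h q =>
    rw [hcc] at hcyc hx hy hlen3
    have hx0 : x = x0 := by rw [hx, Walk.getVert_cons_succ]; exact q.getVert_zero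
    have hql : (Walk.cons h q).length - 1 = q.length := by simp
    have hy0 : y = q.getVert (q.length - 1) := by
      rw [hy, hql, Walk.getVert_cons (n := q.length) q h (by simp at hlen3; omega)]
    have hqlast : s(q.getVert (q.length - 1), u) ∈ q.edges :=
      lastEdge_mem q (by simp at hlen3; omega)
    have hnodup : (Walk.cons h q).edges.Nodup := hcyc.isTrail.edges_nodup
    rw [Walk.edges_cons] at hnodup
    have hnot : s(u, x0) ∉ q.edges := (List.nodup_cons.mp hnodup).1
    apply hnot
    have : s(q.getVert (q.length - 1), u) = s(u, x0) := by
      rw [← hy0, ← hxy, hx0]; exact Sym2.eq_swap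
    rwa [this] at hqlast

end AuxSimp

section AuxNth


variable {n : ℕ}

noncomputable def nthE (T : Finset (Fin n)) (k : ℕ) (hk : k < T.card) : Fin n :=
  T.orderEmbOfFin rfl ⟨k, hk⟩

lemma nthE_mem (T : Finset (Fin n)) (k : ℕ) (hk : k < T.card) : nthE T k hk ∈ T :=
  T.orderEmbOfFin_mem rfl _

lemma nthE_lt_nthE (T : Finset (Fin n)) {k l : ℕ} (hk : k < T.card) (hl : l < T.card)
    (h : k < l) : nthE T k hk < nthE T l hl :=
  (T.orderEmbOfFin rfl).strictMono (by simpa using h)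

lemma nthE_le_nthE_iff (T : Finset (Fin n)) {k l : ℕ} (hk : k < T.card) (hl : l < T.card) :
    nthE T k hk ≤ nthE T l hl ↔ k ≤ l := by
  constructor
  · intro h
    by_contra hlt
    push_neg at hlt
    exact absurd h (not_le.mpr (nthE_lt_nthE T hl hk hlt))
  · intro h
    rcases Nat.eq_or_lt_of_le h with rfl | h
    · rfl
    · exact le_of_lt (nthE_lt_nthE T hk hl h)

lemma nthE_inj (T : Finset (Fin n)) {k l : ℕ} (hk : k < T.card) (hl : l < T.card)
    (h : nthE T k hk = nthE T l hl) : k = l := by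
  have := (T.orderEmbOfFin rfl).injective h
  exact congrArg Fin.val this

lemma exists_nthE {T : Finset (Fin n)} {j : Fin n} (hj : j ∈ T) :
    ∃ (k : ℕ) (hk : k < T.card), nthE T k hk = j := by
  have : j ∈ Set.range (T.orderEmbOfFin rfl) := by
    rw [Finset.range_orderEmbOfFin]; exact hj
  obtain ⟨m, hm⟩ := this
  exact ⟨m.1, m.2, by simpa [nthE] using hm⟩

lemma card_filter_le_ge (T : Finset (Fin n)) (k : ℕ) (hk : k < T.card) :
    k + 1 ≤ (T.filter (· ≤ nthE T k hk)).card := by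
  classical
  have hsub : (Finset.Iic (⟨k, hk⟩ : Fin T.card)).image (T.orderEmbOfFin rfl)
      ⊆ T.filter (· ≤ nthE T k hk) := by
    intro y hy
    obtain ⟨m, hm, rfl⟩ := Finset.mem_image.mp hy
    refine Finset.mem_filter.mpr ⟨T.orderEmbOfFin_mem rfl m, ?_⟩
    exact (T.orderEmbOfFin rfl).monotone (Finset.mem_Iic.mp hm)
  have hcard : ((Finset.Iic (⟨k, hk⟩ : Fin T.card)).image (T.orderEmbOfFin rfl)).card
      = k + 1 := by
    rw [Finset.card_image_of_injective _ (T.orderEmbOfFin rfl).injective, Fin.card_Iic]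
  calc k + 1 = _ := hcard.symm
    _ ≤ _ := Finset.card_le_card hsub

lemma card_filter_le_lt (T : Finset (Fin n)) (k : ℕ) (hk : k < T.card) {x : Fin n}
    (hx : x < nthE T k hk) : (T.filter (· ≤ x)).card ≤ k := by
  classical
  have hsub : T.filter (· ≤ x) ⊆ (Finset.Iio (⟨k, hk⟩ : Fin T.card)).image (T.orderEmbOfFin rfl) := by
    intro y hy
    obtain ⟨hyT, hyx⟩ := Finset.mem_filter.mp hy
    obtain ⟨m, hm, rfl⟩ := exists_nthE hyT
    refine Finset.mem_image.mpr ⟨⟨m, hm⟩, ?_, rfl⟩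
    refine Finset.mem_Iio.mpr ?_
    have : nthE T m hm < nthE T k hk := lt_of_le_of_lt hyx hx
    by_contra hmk
    simp only [not_lt, Fin.le_def] at hmk
    exact absurd this (not_lt.mpr ((nthE_le_nthE_iff T hk hm).mpr hmk))
  calc (T.filter (· ≤ x)).card ≤ _ := Finset.card_le_card hsub
    _ ≤ (Finset.Iio (⟨k, hk⟩ : Fin T.card)).card := Finset.card_image_le
    _ = k := by rw [Fin.card_Iio]

/-- k-th smallest of a superset is ≤ k-th smallest of a subset. -/
lemma nthE_superset_le {S T : Finset (Fin n)} (hST : S ⊆ T) (k : ℕ) (hkS : k < S.card)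
    (hkT : k < T.card) : nthE T k hkT ≤ nthE S k hkS := by
  by_contra h
  push_neg at h
  have h1 : k + 1 ≤ (S.filter (· ≤ nthE S k hkS)).card := card_filter_le_ge S k hkS
  have h2 : (T.filter (· ≤ nthE S k hkS)).card ≤ k := card_filter_le_lt T k hkT h
  have : (S.filter (· ≤ nthE S k hkS)) ⊆ (T.filter (· ≤ nthE S k hkS)) :=
    Finset.filter_subset_filter _ hST
  have := Finset.card_le_card this
  omega

lemma nthE_le_succ_of_subset {S T : Finset (Fin n)} (hST : S ⊆ T) (hc : T.card = S.card + 1)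
    (k : ℕ) (hkS : k < S.card) (hkT : k + 1 < T.card) :
    nthE S k hkS ≤ nthE T (k+1) hkT := by
  classical
  by_contra h
  push_neg at h
  have h1 : k + 2 ≤ (T.filter (· ≤ nthE T (k+1) hkT)).card := card_filter_le_ge T (k+1) hkT
  have h2 : (S.filter (· ≤ nthE T (k+1) hkT)).card ≤ k := card_filter_le_lt S k hkS h
  have hsub : T.filter (· ≤ nthE T (k+1) hkT)
      ⊆ (S.filter (· ≤ nthE T (k+1) hkT)) ∪ (T \ S) := by
    intro y hy
    obtain ⟨hyT, hyx⟩ := Finset.mem_filter.mp hy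
    by_cases hyS : y ∈ S
    · exact Finset.mem_union_left _ (Finset.mem_filter.mpr ⟨hyS, hyx⟩)
    · exact Finset.mem_union_right _ (Finset.mem_sdiff.mpr ⟨hyT, hyS⟩)
  have hcsd : (T \ S).card = 1 := by
    rw [Finset.card_sdiff_of_subset hST]; omega
  have := Finset.card_le_card hsub
  have := Finset.card_union_le (S.filter (· ≤ nthE T (k+1) hkT)) (T \ S)
  omega

lemma nthE_between {S T : Finset (Fin n)} (hST : S ⊆ T) (hc : T.card = S.card + 1)
    (k : ℕ) (hkS : k < S.card) (hkT : k < T.card) (hkT' : k + 1 < T.card) :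
    nthE S k hkS = nthE T k hkT ∨ nthE S k hkS = nthE T (k+1) hkT' := by
  obtain ⟨m, hm, hmeq⟩ := exists_nthE (hST (nthE_mem S k hkS))
  have hlow : nthE T k hkT ≤ nthE T m hm := hmeq.symm ▸ nthE_superset_le hST k hkS hkT
  have hhigh : nthE T m hm ≤ nthE T (k+1) hkT' :=
    hmeq.symm ▸ nthE_le_succ_of_subset hST hc k hkS hkT'
  have hk_le : k ≤ m := (nthE_le_nthE_iff T hkT hm).mp hlow
  have hle_k1 : m ≤ k + 1 := (nthE_le_nthE_iff T hm hkT').mp hhigh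
  rcases Nat.eq_or_lt_of_le hk_le with h | h
  · left; rw [← hmeq]; congr 1; omega
  · right; rw [← hmeq]; congr 1; omega

lemma nthE_univ (k : ℕ) (hk : k < (Finset.univ : Finset (Fin n)).card) :
    nthE (Finset.univ : Finset (Fin n)) k hk = ⟨k, by simpa using hk⟩ := by
  have hcard : (Finset.univ : Finset (Fin n)).card = n := Finset.card_univ.trans (Fintype.card_fin n)
  have hf : ∀ x : Fin (Finset.univ : Finset (Fin n)).card,
      (⟨x.1, by omega⟩ : Fin n) ∈ (Finset.univ : Finset (Fin n)) := fun _ => Finset.mem_univ _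
  have hmono : StrictMono (fun x : Fin (Finset.univ : Finset (Fin n)).card =>
      (⟨x.1, by omega⟩ : Fin n)) := fun a b hab => by
    simp only [Fin.lt_def] at hab ⊢; exact hab
  have := Finset.orderEmbOfFin_unique (s := (Finset.univ : Finset (Fin n))) rfl hf hmono
  have h2 := congrFun this ⟨k, hk⟩
  simp only at h2
  rw [nthE, ← h2]

end AuxNth

section AuxGT
variable {n : ℕ}

-- Tset
def Tset (w : Equiv.Perm (Fin n)) (i : ℕ) : Finset (Fin n) :=
  Finset.univ.filter (fun j => i ≤ ((w j : Fin n) : ℕ))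

lemma Tset_card (w : Equiv.Perm (Fin n)) (i : ℕ) : (Tset w i).card = n - i := by
  classical
  have h1 : Tset w i = (Finset.univ.filter (fun m : Fin n => i ≤ (m : ℕ))).image w.symm := by
    ext j
    simp only [Tset, Finset.mem_filter, Finset.mem_univ, true_and, Finset.mem_image]
    constructor
    · intro h; exact ⟨w j, by simp [h]⟩
    · rintro ⟨m, hm, rfl⟩; simpa using hm
  rw [h1, Finset.card_image_of_injective _ w.symm.injective]
  have himg : (Finset.univ.filter (fun m : Fin n => i ≤ (m : ℕ))).image Fin.val
      = (Finset.range n).filter (fun m => i ≤ m) := by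
    ext m
    simp only [Finset.mem_image, Finset.mem_filter, Finset.mem_univ, true_and,
      Finset.mem_range]
    constructor
    · rintro ⟨a, ha, rfl⟩; exact ⟨a.isLt, ha⟩
    · rintro ⟨hm, him⟩; exact ⟨⟨m, hm⟩, him, rfl⟩
  have h2 := congrArg Finset.card himg
  rw [Finset.card_image_of_injective _ Fin.val_injective] at h2
  rw [h2]
  have h3 : (Finset.range n).filter (fun m => i ≤ m) = Finset.Ico i n := by
    ext m; simp [Finset.mem_range, Finset.mem_Ico]; omega
  rw [h3, Nat.card_Ico]

lemma Tset_zero (w : Equiv.Perm (Fin n)) : Tset w 0 = Finset.univ := by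
  ext j; simp [Tset]

lemma Tset_subset (w : Equiv.Perm (Fin n)) (i : ℕ) : Tset w (i+1) ⊆ Tset w i := by
  intro j hj
  simp only [Tset, Finset.mem_filter, Finset.mem_univ, true_and] at hj ⊢
  omega

end AuxGT

section AuxAw
open Finset

variable {n : ℕ}

lemma nthE_congr {S T : Finset (Fin n)} (h : S = T) (k : ℕ) (hk : k < S.card) :
    nthE S k hk = nthE T k (h ▸ hk) := by subst h; rfl

/-- The vertex pattern attached to a permutation. -/
noncomputable def Aw (lr : Fin n → ℝ) (w : Equiv.Perm (Fin n)) : GTIdx n → ℝ :=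
  fun p => if h : GTValid n p then
    lr (nthE (Tset w (p.1 : ℕ)) (p.2 : ℕ)
      (by rw [Tset_card]; simp only [GTValid] at h; omega))
  else 0

lemma Aw_apply_valid (lr : Fin n → ℝ) (w : Equiv.Perm (Fin n)) {p : GTIdx n}
    (h : GTValid n p) (hk : (p.2 : ℕ) < (Tset w (p.1 : ℕ)).card) :
    Aw lr w p = lr (nthE (Tset w (p.1 : ℕ)) (p.2 : ℕ) hk) := by
  rw [Aw, dif_pos h]

lemma entryR_Aw (lr : Fin n → ℝ) (w : Equiv.Perm (Fin n)) {i k : ℕ} (h : i + k < n)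
    (hk : k < (Tset w i).card) :
    entryR (Aw lr w) i k = lr (nthE (Tset w i) k hk) := by
  rw [entryR, dif_pos ⟨by omega, by omega⟩]
  exact Aw_apply_valid lr w (by simpa [GTValid] using h) hk

lemma hk_of_lt (w : Equiv.Perm (Fin n)) {i k : ℕ} (h : i + k < n) : k < (Tset w i).card := by
  rw [Tset_card]; omega

lemma Aw_mem_GTPoly (lr : Fin n → ℝ) (hanti : StrictAnti lr) (w : Equiv.Perm (Fin n)) :
    Aw lr w ∈ GTPoly n lr := by
  refine ⟨?_, ?_, ?_⟩
  · intro j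
    have h : 0 + (j : ℕ) < n := by omega
    rw [entryR_Aw lr w h (hk_of_lt w h), nthE_congr (Tset_zero w) _ _, nthE_univ]
  · intro i j hij
    have h1 : (i+1) + j < n := by omega
    have h2 : i + j < n := by omega
    have h3 : i + (j+1) < n := by omega
    rw [entryR_Aw lr w h1 (hk_of_lt w h1), entryR_Aw lr w h2 (hk_of_lt w h2),
      entryR_Aw lr w h3 (hk_of_lt w h3)]
    have hcards : (Tset w i).card = (Tset w (i+1)).card + 1 := by
      rw [Tset_card, Tset_card]; omega
    constructor
    · exact hanti.antitone (nthE_superset_le (Tset_subset w i) j _ _)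
    · exact hanti.antitone (nthE_le_succ_of_subset (Tset_subset w i) hcards j _ _)
  · intro p hp
    rw [Aw, dif_neg hp]

lemma Aw_row_strict (lr : Fin n → ℝ) (hanti : StrictAnti lr) (w : Equiv.Perm (Fin n))
    {i k : ℕ} (h : i + (k+1) < n) :
    entryR (Aw lr w) i (k+1) < entryR (Aw lr w) i k := by
  have h2 : i + k < n := by omega
  rw [entryR_Aw lr w h (hk_of_lt w h), entryR_Aw lr w h2 (hk_of_lt w h2)]
  exact hanti (nthE_lt_nthE _ _ _ (by omega))

lemma squeeze_le {a b x y u : ℝ} (ha : 0 < a) (hb : 0 < b) (hab : a + b = 1)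
    (hx : x ≤ u) (hy : y ≤ u) (h : a*x + b*y = u) : x = u ∧ y = u := by
  constructor
  · by_contra hne
    have hxlt : x < u := lt_of_le_of_ne hx hne
    have h1 : a*x < a*u := mul_lt_mul_of_pos_left hxlt ha
    have h2 : b*y ≤ b*u := mul_le_mul_of_nonneg_left hy hb.le
    have h3 : a*u + b*u = u := by rw [← add_mul, hab, one_mul]
    linarith
  · by_contra hne
    have hylt : y < u := lt_of_le_of_ne hy hne
    have h1 : b*y < b*u := mul_lt_mul_of_pos_left hylt hb
    have h2 : a*x ≤ a*u := mul_le_mul_of_nonneg_left hx ha.le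
    have h3 : a*u + b*u = u := by rw [← add_mul, hab, one_mul]
    linarith

lemma squeeze_ge {a b x y u : ℝ} (ha : 0 < a) (hb : 0 < b) (hab : a + b = 1)
    (hx : u ≤ x) (hy : u ≤ y) (h : a*x + b*y = u) : x = u ∧ y = u := by
  constructor
  · by_contra hne
    have hxlt : u < x := lt_of_le_of_ne hx (Ne.symm hne)
    have h1 : a*u < a*x := mul_lt_mul_of_pos_left hxlt ha
    have h2 : b*u ≤ b*y := mul_le_mul_of_nonneg_left hy hb.le
    have h3 : a*u + b*u = u := by rw [← add_mul, hab, one_mul]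
    linarith
  · by_contra hne
    have hylt : u < y := lt_of_le_of_ne hy (Ne.symm hne)
    have h1 : b*u < b*y := mul_lt_mul_of_pos_left hylt hb
    have h2 : a*u ≤ a*x := mul_le_mul_of_nonneg_left hx ha.le
    have h3 : a*u + b*u = u := by rw [← add_mul, hab, one_mul]
    linarith

lemma entryR_combo {A B C : GTIdx n → ℝ} {a b : ℝ} (h : a • B + b • C = A) {i k : ℕ}
    (hi : i < n) (hkn : k < n) : a * entryR B i k + b * entryR C i k = entryR A i k := by
  rw [entryR, entryR, entryR, dif_pos ⟨hi, hkn⟩, dif_pos ⟨hi, hkn⟩, dif_pos ⟨hi, hkn⟩, ← h]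
  simp

lemma Aw_extreme (lr : Fin n → ℝ) (hanti : StrictAnti lr) (w : Equiv.Perm (Fin n)) :
    Aw lr w ∈ Set.extremePoints ℝ (GTPoly n lr) := by
  refine ⟨Aw_mem_GTPoly lr hanti w, ?_⟩
  intro B hB C hC hseg
  obtain ⟨a, b, ha, hb, hab, hsum⟩ := hseg
  have key : ∀ i k : ℕ, i + k < n →
      entryR B i k = entryR (Aw lr w) i k ∧ entryR C i k = entryR (Aw lr w) i k := by
    intro i
    induction i with
    | zero =>
      intro k hk
      have hB0 := hB.1 ⟨k, by omega⟩
      have hC0 := hC.1 ⟨k, by omega⟩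
      have hA0 := (Aw_mem_GTPoly lr hanti w).1 ⟨k, by omega⟩
      constructor
      · exact hB0.trans hA0.symm
      · exact hC0.trans hA0.symm
    | succ i ih =>
      intro k hk
      have hik : i + k < n := by omega
      have hik1 : i + (k+1) < n := by omega
      have hcards : (Tset w i).card = (Tset w (i+1)).card + 1 := by
        rw [Tset_card, Tset_card]; omega
      have hbet := nthE_between (Tset_subset w i) hcards k (hk_of_lt w hk)
        (hk_of_lt w hik) (hk_of_lt w hik1)
      have hpt : a * entryR B (i+1) k + b * entryR C (i+1) k = entryR (Aw lr w) (i+1) k :=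
        entryR_combo hsum (by omega) (by omega)
      have hBc := (hB.2.1 i k (by omega))
      have hCc := (hC.2.1 i k (by omega))
      rcases hbet with hcase | hcase
      · -- entry (i+1,k) of Aw equals entry (i,k)
        have hup : entryR (Aw lr w) (i+1) k = entryR (Aw lr w) i k := by
          rw [entryR_Aw lr w hk (hk_of_lt w hk), entryR_Aw lr w hik (hk_of_lt w hik), hcase]
        rw [hup] at hpt ⊢
        have hCle' : entryR C (i+1) k ≤ entryR (Aw lr w) i k := by
          have := hCc.1; rw [(ih k hik).2] at this; exact this
        have hBle' : entryR B (i+1) k ≤ entryR (Aw lr w) i k := by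
          have := hBc.1; rw [(ih k hik).1] at this; exact this
        exact squeeze_le ha hb hab hBle' hCle' hpt
      · -- entry (i+1,k) of Aw equals entry (i,k+1)
        have hup : entryR (Aw lr w) (i+1) k = entryR (Aw lr w) i (k+1) := by
          rw [entryR_Aw lr w hk (hk_of_lt w hk), entryR_Aw lr w hik1 (hk_of_lt w hik1), hcase]
        rw [hup] at hpt ⊢
        have hBge : entryR (Aw lr w) i (k+1) ≤ entryR B (i+1) k := by
          have := hBc.2; rw [(ih (k+1) hik1).1] at this; exact this
        have hCge : entryR (Aw lr w) i (k+1) ≤ entryR C (i+1) k := by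
          have := hCc.2; rw [(ih (k+1) hik1).2] at this; exact this
        exact squeeze_ge ha hb hab hBge hCge hpt
  have hfin : ∀ (D : GTIdx n → ℝ), D ∈ GTPoly n lr →
      (∀ i k : ℕ, i + k < n → entryR D i k = entryR (Aw lr w) i k) → D = Aw lr w := by
    intro D hD hDk
    funext p
    by_cases hp : GTValid n p
    · have hval : (p.1 : ℕ) + (p.2 : ℕ) < n := hp
      have := hDk p.1 p.2 hval
      rw [entryR, entryR, dif_pos ⟨p.1.isLt, p.2.isLt⟩, dif_pos ⟨p.1.isLt, p.2.isLt⟩] at this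
      simpa using this
    · rw [hD.2.2 p hp, (Aw_mem_GTPoly lr hanti w).2.2 p hp]
  exact hfin B hB (fun i k h => (key i k h).1)

lemma Aw_acyclic (lr : Fin n → ℝ) (hanti : StrictAnti lr) (w : Equiv.Perm (Fin n)) :
    (Gamma n (Aw lr w)).IsAcyclic := by
  apply acyclic_of_levels _ (fun p => (p.1.1 : ℕ))
  · intro p q hadj
    rcases hadj.1 with h | h
    · left; exact h.2.2.1.symm
    · right; exact h.2.2.1.symm
  · intro u p q h1 h2 hg
    have hval : ∀ r : GTNode n, Aw lr w r.1 = lr (nthE (Tset w (r.1.1 : ℕ)) (r.1.2 : ℕ)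
        (by rw [Tset_card]; have := r.2; simp only [GTValid] at this; omega)) :=
      fun r => Aw_apply_valid lr w r.2 _
    have heq : Aw lr w p.1 = Aw lr w q.1 := h1.2.symm.trans h2.2
    rw [hval p, hval q] at heq
    have hnth := hanti.injective heq
    have hcol : (p.1.2 : ℕ) = (q.1.2 : ℕ) := by
      have hpq : Tset w (p.1.1 : ℕ) = Tset w (q.1.1 : ℕ) := by rw [hg]
      rw [nthE_congr hpq] at hnth
      exact nthE_inj _ _ _ hnth
    exact Subtype.ext (Prod.ext (Fin.ext hg) (Fin.ext hcol))

end AuxAw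

section AuxRowM
open Finset

variable {n : ℕ}

lemma rowM_Aw (lr : Fin n → ℝ) (hanti : StrictAnti lr) (w : Equiv.Perm (Fin n)) (i : ℕ) :
    rowM (Aw lr w) i = (Tset w i).val.map lr := by
  classical
  rcases lt_or_ge i n with hin | hin
  · have hentry : ∀ j : Fin n, (j : ℕ) ∈ Set.univ → True := fun _ _ => trivial
    set F : Finset (Fin n) := Finset.univ.filter (fun j : Fin n => i + (j : ℕ) < n) with hF
    have hinj : Set.InjOn (fun j : Fin n => entryR (Aw lr w) i (j : ℕ)) F := by
      intro x hx y hy hxy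
      simp only [hF, Finset.coe_filter, Set.mem_setOf_eq, Finset.mem_univ, true_and] at hx hy
      simp only at hxy
      rw [entryR_Aw lr w (by omega) (hk_of_lt w (by omega : i + (x:ℕ) < n)),
        entryR_Aw lr w (by omega) (hk_of_lt w (by omega : i + (y:ℕ) < n))] at hxy
      exact Fin.ext (nthE_inj _ _ _ (hanti.injective hxy))
    have h1 : rowM (Aw lr w) i = (F.image (fun j : Fin n => entryR (Aw lr w) i (j : ℕ))).val := by
      rw [rowM, ← hF, Finset.image_val_of_injOn hinj]
      simp [Multiset.map_map]
    have h2 : F.image (fun j : Fin n => entryR (Aw lr w) i (j : ℕ)) = (Tset w i).image lr := by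
      ext x
      simp only [Finset.mem_image]
      constructor
      · rintro ⟨j, hj, rfl⟩
        simp only [hF, Finset.mem_filter, Finset.mem_univ, true_and] at hj
        rw [entryR_Aw lr w hj (hk_of_lt w hj)]
        exact ⟨nthE (Tset w i) j (hk_of_lt w hj), nthE_mem _ _ _, rfl⟩
      · rintro ⟨t, ht, rfl⟩
        obtain ⟨k, hk, rfl⟩ := exists_nthE ht
        have hkn : i + k < n := by have := hk; rw [Tset_card] at this; omega
        refine ⟨⟨k, by omega⟩, ?_, ?_⟩
        · simp only [hF, Finset.mem_filter, Finset.mem_univ, true_and]; exact hkn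
        · simp only
          rw [entryR_Aw lr w hkn (hk_of_lt w hkn)]
    have h3 : ((Tset w i).image lr).val = (Tset w i).val.map lr :=
      Finset.image_val_of_injOn (hanti.injective.injOn)
    rw [h1, h2, h3]
  · have h1 : (Finset.univ.filter (fun j : Fin n => i + (j : ℕ) < n)) = ∅ := by
      ext j; simp only [Finset.mem_filter, Finset.mem_univ, true_and, Finset.notMem_empty,
        iff_false]
      omega
    have h2 : Tset w i = ∅ := by
      ext j; simp only [Tset, Finset.mem_filter, Finset.mem_univ, true_and,
        Finset.notMem_empty, iff_false]
      have := (w j).isLt; omega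
    rw [rowM, h1, h2]
    simp

lemma Tset_insert (w : Equiv.Perm (Fin n)) (i : Fin n) :
    Tset w (i : ℕ) = insert (w⁻¹ i) (Tset w ((i : ℕ) + 1)) := by
  ext j
  simp only [Tset, Finset.mem_filter, Finset.mem_univ, true_and, Finset.mem_insert]
  constructor
  · intro h
    rcases Nat.eq_or_lt_of_le h with heq | hlt
    · left
      have : w j = i := Fin.ext heq.symm
      rw [← this]; simp
    · right; omega
  · rintro (rfl | h)
    · simp
    · omega

lemma not_mem_Tset_succ (w : Equiv.Perm (Fin n)) (i : Fin n) :
    w⁻¹ i ∉ Tset w ((i : ℕ) + 1) := by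
  simp only [Tset, Finset.mem_filter, Finset.mem_univ, true_and, not_le,
    Equiv.Perm.inv_def, Equiv.apply_symm_apply]
  omega

end AuxRowM
section AuxStrict
open SimpleGraph

variable {n : ℕ} {lr : Fin n → ℝ} {A : GTIdx n → ℝ}

lemma entryR_eq_apply (A : GTIdx n → ℝ) {i k : ℕ} (hi : i < n) (hk : k < n) :
    entryR A i k = A (⟨i, hi⟩, ⟨k, hk⟩) := dif_pos ⟨hi, hk⟩

lemma row_mono (hA : A ∈ GTPoly n lr) {i k : ℕ} (h : i + (k+1) < n) :
    entryR A i (k+1) ≤ entryR A i k := by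
  have h' : i + 1 + k < n := by omega
  exact le_trans (hA.2.1 i k h').2 (hA.2.1 i k h').1

lemma row_antitone (hA : A ∈ GTPoly n lr) {i c c' : ℕ} (hcc : c ≤ c') (h : i + c' < n) :
    entryR A i c' ≤ entryR A i c := by
  induction c', hcc using Nat.le_induction with
  | base => exact le_rfl
  | succ m hm ih => exact le_trans (row_mono hA h) (ih (by omega))

lemma row_strict (hA : A ∈ GTPoly n lr) (hanti : StrictAnti lr)
    (hac : (Gamma n A).IsAcyclic) {i k : ℕ} (h : i + (k+1) < n) :
    entryR A i (k+1) < entryR A i k := by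
  rcases eq_or_lt_of_le (row_mono hA h) with heq | hlt
  swap
  · exact hlt
  exfalso
  cases i with
  | zero =>
    have h1 := hA.1 ⟨k+1, by omega⟩
    have h2 := hA.1 ⟨k, by omega⟩
    simp only [Fin.val_mk] at h1 h2
    have : lr ⟨k+1, by omega⟩ = lr ⟨k, by omega⟩ := by rw [← h1, ← h2]; exact heq
    exact absurd this (ne_of_lt (hanti (by simp [Fin.lt_def])))
  | succ m =>
    have hc1 := hA.2.1 m (k+1) (by omega)
    have hc2 := hA.2.1 m k (by omega)
    have hc3 := hA.2.1 (m+1) k (by omega)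
    -- common value
    have hup : entryR A m (k+1) = entryR A (m+1) k := le_antisymm hc2.2 (heq ▸ hc1.1)
    have hdn : entryR A (m+2) k = entryR A (m+1) k := le_antisymm hc3.1 (heq ▸ hc3.2)
    -- four nodes
    have v0 : GTValid n ((⟨m+2, by omega⟩ : Fin n), (⟨k, by omega⟩ : Fin n)) := by
      simp only [GTValid]; omega
    have v1 : GTValid n ((⟨m+1, by omega⟩ : Fin n), (⟨k, by omega⟩ : Fin n)) := by
      simp only [GTValid]; omega
    have v2 : GTValid n ((⟨m, by omega⟩ : Fin n), (⟨k+1, by omega⟩ : Fin n)) := by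
      simp only [GTValid]; omega
    have v3 : GTValid n ((⟨m+1, by omega⟩ : Fin n), (⟨k+1, by omega⟩ : Fin n)) := by
      simp only [GTValid]; omega
    set P0 : GTNode n := ⟨_, v0⟩ with hP0
    set P1 : GTNode n := ⟨_, v1⟩ with hP1
    set P2 : GTNode n := ⟨_, v2⟩ with hP2
    set P3 : GTNode n := ⟨_, v3⟩ with hP3
    have e01 : (Gamma n A).Adj P0 P1 := by
      refine ⟨Or.inl ⟨v0, v1, by simp [hP0, hP1], Or.inl (by simp [hP0, hP1])⟩, ?_⟩
      rw [← entryR_eq_apply A (by omega) (by omega), ← entryR_eq_apply A (by omega) (by omega)]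
      exact hdn
    have e12 : (Gamma n A).Adj P1 P2 := by
      refine ⟨Or.inl ⟨v1, v2, by simp [hP1, hP2], Or.inr (by simp [hP1, hP2])⟩, ?_⟩
      rw [← entryR_eq_apply A (by omega) (by omega), ← entryR_eq_apply A (by omega) (by omega)]
      exact hup.symm
    have e32 : (Gamma n A).Adj P3 P2 := by
      refine ⟨Or.inl ⟨v3, v2, by simp [hP3, hP2], Or.inl (by simp [hP3, hP2])⟩, ?_⟩
      rw [← entryR_eq_apply A (by omega) (by omega), ← entryR_eq_apply A (by omega) (by omega)]
      exact heq.trans hup.symm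
    have e03 : (Gamma n A).Adj P0 P3 := by
      refine ⟨Or.inl ⟨v0, v3, by simp [hP0, hP3], Or.inr (by simp [hP0, hP3])⟩, ?_⟩
      rw [← entryR_eq_apply A (by omega) (by omega), ← entryR_eq_apply A (by omega) (by omega)]
      exact hdn.trans heq.symm
    have ne01 : P0 ≠ P1 := by
      simp only [hP0, hP1, Ne, Subtype.mk.injEq, Prod.mk.injEq, Fin.mk.injEq]
      omega
    have ne02 : P0 ≠ P2 := by
      simp only [hP0, hP2, Ne, Subtype.mk.injEq, Prod.mk.injEq, Fin.mk.injEq]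
      omega
    have ne12 : P1 ≠ P2 := by
      simp only [hP1, hP2, Ne, Subtype.mk.injEq, Prod.mk.injEq, Fin.mk.injEq]
      omega
    have ne03 : P0 ≠ P3 := by
      simp only [hP0, hP3, Ne, Subtype.mk.injEq, Prod.mk.injEq, Fin.mk.injEq]
      omega
    have ne32 : P3 ≠ P2 := by
      simp only [hP3, hP2, Ne, Subtype.mk.injEq, Prod.mk.injEq, Fin.mk.injEq]
      omega
    have ne13 : P1 ≠ P3 := by
      simp only [hP1, hP3, Ne, Subtype.mk.injEq, Prod.mk.injEq, Fin.mk.injEq]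
      omega
    have hpath1 : (Walk.cons e01 (Walk.cons e12 Walk.nil)).IsPath := by
      rw [Walk.isPath_def]
      simp [ne01, ne02, ne12]
    have hpath2 : (Walk.cons e03 (Walk.cons e32 Walk.nil)).IsPath := by
      rw [Walk.isPath_def]
      simp [ne03, ne02, ne32]
    have := isAcyclic_iff_path_unique.mp hac ⟨_, hpath1⟩ ⟨_, hpath2⟩
    have hval := congrArg (fun q : (Gamma n A).Path P0 P2 => q.1.support) this
    simp only [Walk.support_cons, Walk.support_nil] at hval
    have : P1 = P3 := by
      have h2 := congrArg (fun l => l.tail.head?) hval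
      simpa using h2
    exact ne13 this

end AuxStrict
section AuxPerturb
open SimpleGraph

variable {n : ℕ} {lr : Fin n → ℝ} {A : GTIdx n → ℝ}

lemma not_extreme_of_levelset (hA : A ∈ GTPoly n lr) (S : Set (GTIdx n))
    (hSvalid : ∀ p ∈ S, GTValid n p)
    (hSrow : ∀ p ∈ S, (p.1 : ℕ) ≠ 0)
    (hSne : S.Nonempty)
    (hSclosed : ∀ p q : GTIdx n, upEdge n p q → A p = A q → (p ∈ S ↔ q ∈ S)) :
    A ∉ Set.extremePoints ℝ (GTPoly n lr) := by
  classical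
  set gapF : Finset ℝ :=
    ((Finset.univ : Finset (GTIdx n × GTIdx n)).filter
      (fun pq => A pq.1 ≠ A pq.2)).image (fun pq => |A pq.1 - A pq.2|) with hgapF
  set δ : ℝ := if hne : gapF.Nonempty then gapF.min' hne else 1 with hδ
  have hall : ∀ x ∈ gapF, 0 < x := by
    intro x hx
    simp only [hgapF, Finset.mem_image, Finset.mem_filter, Finset.mem_univ, true_and] at hx
    obtain ⟨pq, hpq, rfl⟩ := hx
    exact abs_pos.mpr (sub_ne_zero.mpr hpq)
  have hδpos : 0 < δ := by
    rw [hδ]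
    split_ifs with hne
    · exact hall _ (gapF.min'_mem hne)
    · norm_num
  have hδle : ∀ p q : GTIdx n, A p ≠ A q → δ ≤ |A p - A q| := by
    intro p q hne
    have hmem : |A p - A q| ∈ gapF := by
      rw [hgapF]
      exact Finset.mem_image.mpr ⟨(p, q), Finset.mem_filter.mpr ⟨Finset.mem_univ _, hne⟩, rfl⟩
    have hne' : gapF.Nonempty := ⟨_, hmem⟩
    rw [hδ, dif_pos hne']
    exact gapF.min'_le _ hmem
  set ε : ℝ := δ / 2 with hε
  have hεpos : 0 < ε := by rw [hε]; linarith
  set χ : GTIdx n → ℝ := fun p => if p ∈ S then ε else 0 with hχ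
  have hχ0 : ∀ p, p ∉ S → χ p = 0 := fun p hp => if_neg hp
  have hχval : ∀ p, 0 ≤ χ p ∧ χ p ≤ ε := by
    intro p
    by_cases hp : p ∈ S
    · simp [hχ, hp, hεpos.le]
    · simp [hχ, hp, le_of_lt hεpos]
  -- the two perturbed points
  have hmem : ∀ s : ℝ, |s| ≤ 1 → (fun p => A p + s * χ p) ∈ GTPoly n lr := by
    intro s hs
    have habs : ∀ p, |s * χ p| ≤ ε := by
      intro p
      rw [abs_mul]
      calc |s| * |χ p| ≤ 1 * |χ p| := by
            apply mul_le_mul_of_nonneg_right hs (abs_nonneg _)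
        _ = |χ p| := one_mul _
        _ ≤ ε := by
            rw [abs_of_nonneg (hχval p).1]; exact (hχval p).2
    refine ⟨?_, ?_, ?_⟩
    · intro j
      have h0 : (0 : ℕ) < n := lt_of_le_of_lt (Nat.zero_le _) j.isLt
      rw [entryR, dif_pos ⟨h0, j.isLt⟩]
      have hnotS : ((⟨0, h0⟩ : Fin n), (⟨(j : ℕ), j.isLt⟩ : Fin n)) ∉ S := by
        intro hmem
        exact hSrow _ hmem rfl
      rw [hχ0 _ hnotS]
      have := hA.1 j
      rw [entryR, dif_pos ⟨h0, j.isLt⟩] at this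
      simp only [mul_zero, add_zero]
      convert this using 3 <;> exact Fin.ext rfl
    · intro i j hij
      have hi1 : i + 1 < n := by omega
      have hi : i < n := by omega
      have hj : j < n := by omega
      have hj1 : j + 1 < n := by omega
      set p : GTIdx n := (⟨i+1, hi1⟩, ⟨j, hj⟩) with hp
      set q : GTIdx n := (⟨i, hi⟩, ⟨j, hj⟩) with hq
      set q' : GTIdx n := (⟨i, hi⟩, ⟨j+1, hj1⟩) with hq'
      have hvp : GTValid n p := by simp only [GTValid, hp]; omega
      have hvq : GTValid n q := by simp only [GTValid, hq]; omega
      have hvq' : GTValid n q' := by simp only [GTValid, hq']; omega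
      have hup1 : upEdge n p q := ⟨hvp, hvq, by simp [hp, hq], Or.inl (by simp [hp, hq])⟩
      have hup2 : upEdge n p q' := ⟨hvp, hvq', by simp [hp, hq'], Or.inr (by simp [hp, hq'])⟩
      have hc := hA.2.1 i j hij
      have he1 : entryR A (i+1) j = A p := entryR_eq_apply A hi1 hj
      have he2 : entryR A i j = A q := entryR_eq_apply A hi hj
      have he3 : entryR A i (j+1) = A q' := entryR_eq_apply A hi hj1
      constructor
      · rw [entryR, entryR, dif_pos ⟨hi1, hj⟩, dif_pos ⟨hi, hj⟩]
        show A p + s * χ p ≤ A q + s * χ q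
        by_cases hApq : A p = A q
        · have := (hSclosed p q hup1 hApq)
          have hχeq : χ p = χ q := by
            rw [hχ]; simp only
            by_cases hqS : q ∈ S
            · rw [if_pos (this.mpr hqS), if_pos hqS]
            · rw [if_neg (fun hx => hqS (this.mp hx)), if_neg hqS]
          rw [hApq, hχeq]
        · have hlt : A p < A q := by
            have : A p ≤ A q := by rw [← he1, ← he2]; exact hc.1
            exact lt_of_le_of_ne this hApq
          have hgap : δ ≤ A q - A p := by
            have := hδle p q hApq
            rwa [abs_of_neg (by linarith : A p - A q < 0), neg_sub] at this
          have h1 := habs p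
          have h2 := habs q
          have := abs_le.mp h1
          have := abs_le.mp h2
          rw [hε] at *
          linarith [(abs_le.mp h1).1, (abs_le.mp h1).2, (abs_le.mp h2).1, (abs_le.mp h2).2]
      · rw [entryR, entryR, dif_pos ⟨hi, hj1⟩, dif_pos ⟨hi1, hj⟩]
        show A q' + s * χ q' ≤ A p + s * χ p
        by_cases hApq : A p = A q'
        · have := (hSclosed p q' hup2 hApq)
          have hχeq : χ p = χ q' := by
            rw [hχ]; simp only
            by_cases hqS : q' ∈ S
            · rw [if_pos (this.mpr hqS), if_pos hqS]
            · rw [if_neg (fun hx => hqS (this.mp hx)), if_neg hqS]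
          rw [← hApq, hχeq]
        · have hlt : A q' < A p := by
            have : A q' ≤ A p := by rw [← he1, ← he3]; exact hc.2
            exact lt_of_le_of_ne this (fun hx => hApq hx.symm)
          have hgap : δ ≤ A p - A q' := by
            have := hδle p q' hApq
            rwa [abs_of_pos (by linarith : (0:ℝ) < A p - A q')] at this
          have h1 := habs p
          have h2 := habs q'
          rw [hε] at *
          linarith [(abs_le.mp h1).1, (abs_le.mp h1).2, (abs_le.mp h2).1, (abs_le.mp h2).2]
    · intro p hp
      have hns : p ∉ S := fun hx => hp (hSvalid p hx)
      show A p + s * χ p = 0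
      rw [hχ0 p hns, mul_zero, add_zero]
      exact hA.2.2 p hp
  intro hext
  obtain ⟨s0, hs0⟩ := hSne
  set B : GTIdx n → ℝ := fun p => A p + 1 * χ p with hB
  set C : GTIdx n → ℝ := fun p => A p + (-1) * χ p with hC
  have hBmem : B ∈ GTPoly n lr := hmem 1 (by norm_num)
  have hCmem : C ∈ GTPoly n lr := hmem (-1) (by norm_num)
  have hseg : A ∈ openSegment ℝ B C := by
    refine ⟨1/2, 1/2, by norm_num, by norm_num, by norm_num, ?_⟩
    funext pt
    simp only [hB, hC, Pi.add_apply, Pi.smul_apply, smul_eq_mul]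
    ring
  have := hext.2 hBmem hCmem hseg
  have hBA : B = A := this
  have : B s0 = A s0 := congrFun hBA s0
  rw [hB] at this
  simp only [one_mul] at this
  have hχs0 : χ s0 = ε := if_pos hs0
  rw [hχs0] at this
  linarith
end AuxPerturb
section AuxUp
open SimpleGraph

variable {n : ℕ} {lr : Fin n → ℝ} {A : GTIdx n → ℝ}

lemma exists_up_value (hA : A ∈ GTPoly n lr) (hext : A ∈ Set.extremePoints ℝ (GTPoly n lr))
    {i k : ℕ} (h : i + 1 + k < n) :
    entryR A (i+1) k = entryR A i k ∨ entryR A (i+1) k = entryR A i (k+1) := by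
  by_contra hcon
  push_neg at hcon
  obtain ⟨hne1, hne2⟩ := hcon
  have hc := hA.2.1 i k h
  set vv : ℝ := entryR A (i+1) k with hvv
  have hlt1 : vv < entryR A i k := lt_of_le_of_ne hc.1 hne1
  have hlt2 : entryR A i (k+1) < vv := lt_of_le_of_ne hc.2 (fun e => hne2 e.symm)
  have hrow : ∀ c : ℕ, i + c < n → entryR A i c ≠ vv := by
    intro c hcn heqc
    rcases le_or_gt c k with hck | hck
    · have hle : entryR A i k ≤ entryR A i c := row_antitone hA hck (by omega)
      linarith
    · have hle : entryR A i c ≤ entryR A i (k+1) := row_antitone hA hck (by omega)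
      linarith
  have hvp : GTValid n (((⟨i+1, by omega⟩ : Fin n), (⟨k, by omega⟩ : Fin n)) : GTIdx n) := by
    simp only [GTValid]; omega
  set p0 : GTNode n := ⟨_, hvp⟩ with hp0
  have step : ∀ (z1 z2 : GTNode n) (wlk : (Gamma n A).Walk z1 z2),
      A z1.1 = vv → i + 1 ≤ (z1.1.1 : ℕ) → A z2.1 = vv ∧ i + 1 ≤ (z2.1.1 : ℕ) := by
    intro z1 z2 wlk
    induction wlk with
    | nil => intro h1 h2; exact ⟨h1, h2⟩
    | @cons a y b hadj q ih =>
      intro h1 h2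
      have hyval : A y.1 = vv := hadj.2.symm.trans h1
      have hrowy : i + 1 ≤ (y.1.1 : ℕ) := by
        rcases hadj.1 with hup | hup
        · have hr1 : (y.1.1 : ℕ) + 1 = (a.1.1 : ℕ) := hup.2.2.1
          by_contra hlt
          push_neg at hlt
          have hyi : (y.1.1 : ℕ) = i := by omega
          have hcv : i + (y.1.2 : ℕ) < n := by
            have := y.2; simp only [GTValid] at this; omega
          apply hrow (y.1.2 : ℕ) hcv
          rw [entryR_eq_apply A (by omega) (y.1.2).isLt]
          have hnode : ((⟨i, by omega⟩ : Fin n), (⟨(y.1.2 : ℕ), (y.1.2).isLt⟩ : Fin n)) = y.1 :=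
            Prod.ext (Fin.ext hyi.symm) (Fin.ext rfl)
          rw [hnode]
          exact hyval
        · have hr1 : (a.1.1 : ℕ) + 1 = (y.1.1 : ℕ) := hup.2.2.1
          omega
      exact ih hyval hrowy
  set S : Set (GTIdx n) := {q | ∃ hq : GTValid n q, (Gamma n A).Reachable p0 ⟨q, hq⟩} with hS
  have hstart : A p0.1 = vv := by
    rw [hvv, entryR_eq_apply A (by omega) (by omega)]
  refine not_extreme_of_levelset hA S ?_ ?_ ?_ ?_ hext
  · rintro q ⟨hq, _⟩
    exact hq
  · rintro q ⟨hq, hreach⟩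
    obtain ⟨wlk⟩ := hreach
    have := (step p0 ⟨q, hq⟩ wlk hstart (by simp [hp0])).2
    simp only at this
    omega
  · exact ⟨p0.1, hvp, by exact Reachable.refl _⟩
  · intro q r hup heq
    have hadj : (Gamma n A).Adj ⟨q, hup.1⟩ ⟨r, hup.2.1⟩ := ⟨Or.inl hup, heq⟩
    constructor
    · rintro ⟨hq', hre⟩
      exact ⟨hup.2.1, hre.trans hadj.reachable⟩
    · rintro ⟨hr', hre⟩
      exact ⟨hup.1, hre.trans hadj.symm.reachable⟩

end AuxUp
section AuxConv
open Finset

variable {n : ℕ} {lr : Fin n → ℝ} {A : GTIdx n → ℝ}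

/-- indices of λ-values appearing in row i -/
noncomputable def Trow (A : GTIdx n → ℝ) (lr : Fin n → ℝ) (i : ℕ) : Finset (Fin n) :=
  Finset.univ.filter (fun j => ∃ k : ℕ, i + k < n ∧ entryR A i k = lr j)

lemma card_filter_row (i : ℕ) :
    ((Finset.univ : Finset (Fin n)).filter (fun k : Fin n => i + (k : ℕ) < n)).card = n - i := by
  have himg : ((Finset.univ : Finset (Fin n)).filter (fun k : Fin n => i + (k : ℕ) < n)).image
      Fin.val = Finset.range (n - i) := by
    ext m
    simp only [Finset.mem_image, Finset.mem_filter, Finset.mem_univ, true_and, Finset.mem_range]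
    constructor
    · rintro ⟨a, ha, rfl⟩; omega
    · rintro hm; exact ⟨⟨m, by omega⟩, by simpa using (by omega : i + m < n), rfl⟩
  have h2 := congrArg Finset.card himg
  rw [Finset.card_image_of_injective _ Fin.val_injective, Finset.card_range] at h2
  exact h2

lemma Trow_subset_of (hA : A ∈ GTPoly n lr) (hext : A ∈ Set.extremePoints ℝ (GTPoly n lr))
    (i : ℕ) : Trow A lr (i+1) ⊆ Trow A lr i := by
  intro j hj
  simp only [Trow, Finset.mem_filter, Finset.mem_univ, true_and] at hj ⊢
  obtain ⟨k, hk, heq⟩ := hj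
  rcases exists_up_value hA hext (by omega : i + 1 + k < n) with he | he
  · exact ⟨k, by omega, he ▸ heq⟩
  · exact ⟨k+1, by omega, he ▸ heq⟩

lemma Trow_mono (hA : A ∈ GTPoly n lr) (hext : A ∈ Set.extremePoints ℝ (GTPoly n lr))
    {i i' : ℕ} (h : i' ≤ i) : Trow A lr i ⊆ Trow A lr i' := by
  induction i, h using Nat.le_induction with
  | base => exact fun _ h => h
  | succ m hm ih => exact (Trow_subset_of hA hext m).trans ih

lemma Trow_spec (hanti : StrictAnti lr) (hA : A ∈ GTPoly n lr)
    (hext : A ∈ Set.extremePoints ℝ (GTPoly n lr)) (hac : (Gamma n A).IsAcyclic) :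
    ∀ i : ℕ, (Trow A lr i).card = n - i ∧
      ∀ k : ℕ, i + k < n → ∃ hk : k < (Trow A lr i).card,
        entryR A i k = lr (nthE (Trow A lr i) k hk) := by
  intro i
  induction i with
  | zero =>
    have huniv : Trow A lr 0 = Finset.univ := by
      apply Finset.eq_univ_of_forall
      intro j
      simp only [Trow, Finset.mem_filter, Finset.mem_univ, true_and]
      exact ⟨(j : ℕ), by omega, by simpa using hA.1 j⟩
    constructor
    · rw [huniv]; simp
    · intro k hk
      have hkc : k < (Trow A lr 0).card := by rw [huniv]; simpa using (by omega : k < n)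
      refine ⟨hkc, ?_⟩
      rw [nthE_congr huniv, nthE_univ]
      have := hA.1 ⟨k, by omega⟩
      simpa using this
  | succ i ih =>
    obtain ⟨ihcard, ihform⟩ := ih
    rcases le_or_gt n (i+1) with hge | hlt
    · constructor
      · have : Trow A lr (i+1) = ∅ := by
          ext j
          simp only [Trow, Finset.mem_filter, Finset.mem_univ, true_and,
            Finset.notMem_empty, iff_false]
          rintro ⟨k, hk, _⟩
          omega
        rw [this]; simp; omega
      · intro k hk; omega
    · have hnpos : 0 < n := by omega
      have hval : ∀ k : ℕ, i + 1 + k < n →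
          ∃ j : Fin n, entryR A (i+1) k = lr j ∧ j ∈ Trow A lr i := by
        intro k hk
        rcases exists_up_value hA hext hk with he | he
        · obtain ⟨hk0, hf⟩ := ihform k (by omega)
          exact ⟨nthE (Trow A lr i) k hk0, he.trans hf, nthE_mem _ _ _⟩
        · obtain ⟨hk0, hf⟩ := ihform (k+1) (by omega)
          exact ⟨nthE (Trow A lr i) (k+1) hk0, he.trans hf, nthE_mem _ _ _⟩
      set g : Fin n → Fin n := fun k =>
        if h : i + 1 + (k : ℕ) < n then Classical.choose (hval k h) else ⟨0, hnpos⟩ with hgdef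
      have hg : ∀ (k : Fin n) (h : i + 1 + (k : ℕ) < n),
          entryR A (i+1) (k : ℕ) = lr (g k) ∧ g k ∈ Trow A lr i := by
        intro k h
        have hgk : g k = Classical.choose (hval k h) := by
          rw [hgdef]
          exact dif_pos h
        rw [hgk]
        exact Classical.choose_spec (hval k h)
      have hgmono : ∀ (k k' : Fin n), i + 1 + (k : ℕ) < n → i + 1 + (k' : ℕ) < n →
          k < k' → g k < g k' := by
        intro k k' hk hk' hkk
        have hkknat : (k : ℕ) < (k' : ℕ) := hkk
        have hstrict : entryR A (i+1) (k' : ℕ) < entryR A (i+1) (k : ℕ) := by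
          have hs : entryR A (i+1) ((k:ℕ)+1) < entryR A (i+1) (k:ℕ) :=
            row_strict hA hanti hac (by omega : (i+1) + ((k:ℕ)+1) < n)
          have hmono : entryR A (i+1) (k':ℕ) ≤ entryR A (i+1) ((k:ℕ)+1) :=
            row_antitone hA (by omega) (by omega)
          linarith
        have hv1 := (hg k hk).1
        have hv2 := (hg k' hk').1
        rw [hv1, hv2] at hstrict
        rcases lt_trichotomy (g k) (g k') with h | h | h
        · exact h
        · rw [h] at hstrict; exact absurd hstrict (lt_irrefl _)
        · exact absurd (hanti h) (not_lt.mpr (le_of_lt hstrict))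
      have himg : Trow A lr (i+1) =
          (Finset.univ.filter (fun k : Fin n => i + 1 + (k : ℕ) < n)).image g := by
        ext j
        simp only [Trow, Finset.mem_filter, Finset.mem_univ, true_and, Finset.mem_image]
        constructor
        · rintro ⟨k, hkn, heq⟩
          refine ⟨⟨k, by omega⟩, by simpa using hkn, ?_⟩
          have := (hg ⟨k, by omega⟩ (by simpa using hkn)).1
          apply hanti.injective
          rw [← this, ← heq]
        · rintro ⟨k, hk, rfl⟩
          have hk' : i + 1 + (k : ℕ) < n := by
            first
            | simpa using hk
            | exact hk
          exact ⟨(k : ℕ), hk', (hg k hk').1⟩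
      have hinj : Set.InjOn g (Finset.univ.filter (fun k : Fin n => i + 1 + (k : ℕ) < n)) := by
        intro a ha b hb heq
        simp only [Finset.coe_filter, Set.mem_setOf_eq, Finset.mem_univ, true_and] at ha hb
        rcases lt_trichotomy a b with h | h | h
        · exact absurd (hgmono a b ha hb h) (by rw [heq]; exact lt_irrefl _)
        · exact h
        · exact absurd (hgmono b a hb ha h) (by rw [heq]; exact lt_irrefl _)
      have hcard : (Trow A lr (i+1)).card = n - (i+1) := by
        rw [himg, Finset.card_image_of_injOn hinj, card_filter_row]
      refine ⟨hcard, ?_⟩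
      have hcastf : ∀ m : Fin (Trow A lr (i+1)).card, (m : ℕ) < n := by
        intro m; have := m.isLt; omega
      set f : Fin (Trow A lr (i+1)).card → Fin n := fun m => g ⟨(m : ℕ), hcastf m⟩ with hfdef
      have hfmem : ∀ m, f m ∈ Trow A lr (i+1) := by
        intro m
        rw [himg]
        refine Finset.mem_image.mpr ⟨⟨(m : ℕ), hcastf m⟩, ?_, rfl⟩
        simp only [Finset.mem_filter, Finset.mem_univ, true_and]
        have := m.isLt; omega
      have hfmono : StrictMono f := by
        intro a b hab
        have ha := a.isLt; have hb := b.isLt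
        exact hgmono _ _ (by exact (show i + 1 + (a:ℕ) < n by omega))
          (by exact (show i + 1 + (b:ℕ) < n by omega))
          (by exact (show (a:ℕ) < (b:ℕ) from hab))
      have huniq := Finset.orderEmbOfFin_unique (s := Trow A lr (i+1)) rfl hfmem hfmono
      intro k hk
      have hkc : k < (Trow A lr (i+1)).card := by omega
      refine ⟨hkc, ?_⟩
      have h1 := (hg ⟨k, by omega⟩ (by simpa using hk)).1
      have h2 := congrFun huniq ⟨k, hkc⟩
      simp only [hfdef] at h2
      rw [nthE, ← h2]
      simpa using h1

lemma exists_perm_of_simp (hanti : StrictAnti lr) (hA : A ∈ GTPoly n lr)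
    (hext : A ∈ Set.extremePoints ℝ (GTPoly n lr)) (hac : (Gamma n A).IsAcyclic) :
    ∃ w : Equiv.Perm (Fin n), A = Aw lr w := by
  rcases Nat.eq_zero_or_pos n with hn0 | hnpos
  · refine ⟨Equiv.refl _, funext fun p => ?_⟩
    exact absurd p.1.isLt (by omega)
  · have hspec := Trow_spec hanti hA hext hac
    have hT0 : Trow A lr 0 = Finset.univ := by
      apply Finset.eq_univ_of_card
      rw [(hspec 0).1]; simp
    have hne : ∀ j : Fin n, (Finset.univ.filter (fun i : Fin n => j ∈ Trow A lr (i : ℕ))).Nonempty := by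
      intro j
      exact ⟨⟨0, hnpos⟩, by simp [hT0]⟩
    set wf : Fin n → Fin n := fun j =>
      (Finset.univ.filter (fun i : Fin n => j ∈ Trow A lr (i : ℕ))).max' (hne j) with hwf
    have hwfmem : ∀ j, j ∈ Trow A lr ((wf j : ℕ)) := by
      intro j
      have := Finset.max'_mem _ (hne j)
      simpa using (Finset.mem_filter.mp this).2
    have hwfle : ∀ (j : Fin n) (i : Fin n), j ∈ Trow A lr (i : ℕ) → i ≤ wf j := by
      intro j i hi
      exact Finset.le_max' _ _ (by simp [hi])
    have hTiff : ∀ (j : Fin n) (i : ℕ), j ∈ Trow A lr i ↔ i ≤ (wf j : ℕ) := by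
      intro j i
      constructor
      · intro hj
        rcases lt_or_ge i n with hin | hin
        · exact hwfle j ⟨i, hin⟩ hj
        · exfalso
          have hc := (hspec i).1
          have : (Trow A lr i).card = 0 := by omega
          rw [Finset.card_eq_zero] at this
          rw [this] at hj
          exact absurd hj (Finset.notMem_empty j)
      · intro hle
        exact Trow_mono hA hext hle (hwfmem j)
    have winj : Function.Injective wf := by
      intro j j' heq
      set u := (wf j : ℕ) with hu
      have hj1 : j ∈ Trow A lr u := hwfmem j
      have hj2 : j' ∈ Trow A lr u := by rw [hu, heq]; exact hwfmem j'
      have hj1' : j ∉ Trow A lr (u+1) := by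
        rw [hTiff]; omega
      have hj2' : j' ∉ Trow A lr (u+1) := by
        rw [hTiff, ← heq]; omega
      have hun : u < n := (wf j).isLt
      have hcard1 : (Trow A lr u \ Trow A lr (u+1)).card = 1 := by
        rw [Finset.card_sdiff_of_subset (Trow_subset_of hA hext u), (hspec u).1, (hspec (u+1)).1]
        omega
      obtain ⟨a, ha⟩ := Finset.card_eq_one.mp hcard1
      have e1 : j = a := by
        have : j ∈ Trow A lr u \ Trow A lr (u+1) := Finset.mem_sdiff.mpr ⟨hj1, hj1'⟩
        rw [ha] at this; simpa using this
      have e2 : j' = a := by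
        have : j' ∈ Trow A lr u \ Trow A lr (u+1) := Finset.mem_sdiff.mpr ⟨hj2, hj2'⟩
        rw [ha] at this; simpa using this
      rw [e1, e2]
    set w : Equiv.Perm (Fin n) :=
      Equiv.ofBijective wf ((Fintype.bijective_iff_injective_and_card wf).mpr ⟨winj, rfl⟩) with hwdef
    have hTset : ∀ i : ℕ, Tset w i = Trow A lr i := by
      intro i
      ext j
      simp only [Tset, Finset.mem_filter, Finset.mem_univ, true_and]
      have : w j = wf j := rfl
      rw [this, ← hTiff]
    refine ⟨w, funext fun p => ?_⟩
    by_cases hp : GTValid n p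
    · have hpv : (p.1 : ℕ) + (p.2 : ℕ) < n := hp
      obtain ⟨hk, hform⟩ := (hspec (p.1 : ℕ)).2 (p.2 : ℕ) hpv
      have hk' : (p.2 : ℕ) < (Tset w (p.1 : ℕ)).card := by rw [hTset]; exact hk
      rw [Aw_apply_valid lr w hp hk']
      have hAp : A p = entryR A (p.1 : ℕ) (p.2 : ℕ) := by
        rw [entryR_eq_apply A p.1.isLt p.2.isLt]
      rw [hAp, hform, nthE_congr (hTset (p.1 : ℕ)).symm]
    · rw [hA.2.2 p hp, Aw, dif_neg hp]

end AuxConv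

section AuxFinal
variable {n : ℕ}

lemma Aw_injective (lr : Fin n → ℝ) (hanti : StrictAnti lr) {w w' : Equiv.Perm (Fin n)}
    (heq : Aw lr w = Aw lr w') : w = w' := by
  have hT : ∀ i : ℕ, i < n → Tset w i = Tset w' i := by
    intro i hin
    have hcard : (Tset w i).card = (Tset w' i).card := by rw [Tset_card, Tset_card]
    have hnth : ∀ (k : ℕ) (hk : k < (Tset w i).card) (hk' : k < (Tset w' i).card),
        nthE (Tset w i) k hk = nthE (Tset w' i) k hk' := by
      intro k hk hk'
      have hkn : i + k < n := by have := hk; rw [Tset_card] at this; omega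
      have h1 := entryR_Aw lr w hkn hk
      have h2 := entryR_Aw lr w' hkn hk'
      rw [heq] at h1
      exact hanti.injective (h1.symm.trans h2)
    ext j
    constructor
    · intro hj
      obtain ⟨k, hk, rfl⟩ := exists_nthE hj
      rw [hnth k hk (by omega)]
      exact nthE_mem _ _ _
    · intro hj
      obtain ⟨k, hk, rfl⟩ := exists_nthE hj
      rw [← hnth k (by omega) hk]
      exact nthE_mem _ _ _
  apply Equiv.ext
  intro j
  have hij : ∀ i : ℕ, i < n → (i ≤ (w j : ℕ) ↔ i ≤ (w' j : ℕ)) := by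
    intro i hin
    have hmem : (j ∈ Tset w i) ↔ (j ∈ Tset w' i) := by rw [hT i hin]
    simpa [Tset, Finset.mem_filter] using hmem
  rcases lt_trichotomy ((w j : ℕ)) ((w' j : ℕ)) with h | h | h
  · exfalso
    have := (hij ((w' j : ℕ)) (w' j).isLt).mpr le_rfl
    omega
  · exact Fin.ext h
  · exfalso
    have := (hij ((w j : ℕ)) (w j).isLt).mp le_rfl
    omega

end AuxFinal

/-- for regular λ, GT_λ has exactly n! simplicial vertices, and sending a
simplicial vertex v to the permutation w_v (recording which λ_j is deleted when passing
from row i to row i+1) is a bijection with S_n. -/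
theorem statement8 (n : ℕ) (lam : Fin n → ℤ)
    (hreg : ∀ i j : Fin n, i < j → lam j < lam i) :
    Nat.card {A : GTIdx n → ℝ // IsSimpVertex n (fun i => (lam i : ℝ)) A}
      = Nat.factorial n ∧
    ∃ e : {A : GTIdx n → ℝ // IsSimpVertex n (fun i => (lam i : ℝ)) A}
        ≃ Equiv.Perm (Fin n),
      ∀ A : {A : GTIdx n → ℝ // IsSimpVertex n (fun i => (lam i : ℝ)) A}, ∀ i : Fin n,
        rowM A.1 (i : ℕ) = ((lam ((e A)⁻¹ i) : ℝ)) ::ₘ rowM A.1 ((i : ℕ) + 1) := by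
  classical
  set lr : Fin n → ℝ := fun i => (lam i : ℝ) with hlr
  have hanti : StrictAnti lr := by
    intro a b hab
    show ((lam b : ℝ)) < ((lam a : ℝ))
    exact_mod_cast hreg a b hab
  set f : Equiv.Perm (Fin n) → {A : GTIdx n → ℝ // IsSimpVertex n lr A} := fun w =>
    ⟨Aw lr w, Aw_extreme lr hanti w, Aw_acyclic lr hanti w⟩ with hf
  have hbij : Function.Bijective f := by
    constructor
    · intro w w' h
      exact Aw_injective lr hanti (congrArg Subtype.val h)
    · rintro ⟨A, hA⟩
      obtain ⟨w, hw⟩ := exists_perm_of_simp hanti hA.1.1 hA.1 hA.2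
      exact ⟨w, Subtype.ext hw.symm⟩
  refine ⟨?_, ⟨(Equiv.ofBijective f hbij).symm, ?_⟩⟩
  · rw [Nat.card_congr ((Equiv.ofBijective f hbij).symm), Nat.card_eq_fintype_card,
      Fintype.card_perm, Fintype.card_fin]
  · intro A i
    set w := (Equiv.ofBijective f hbij).symm A with hwdef
    have hfa : f w = A := (Equiv.ofBijective f hbij).apply_symm_apply A
    have hval : A.1 = Aw lr w := by rw [← hfa]
    rw [hval, rowM_Aw lr hanti w, rowM_Aw lr hanti w,
      show Tset w (i : ℕ) = insert (w⁻¹ i) (Tset w ((i : ℕ) + 1)) from Tset_insert w i,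
      Finset.insert_val_of_notMem (not_mem_Tset_succ w i), Multiset.map_cons]
end

section
/- Let v be a simplicial vertex of GT_λ (λ regular) with permutation w = w_v, and let F be the monomial substitution t_{0,j} ↦ x_1, t_{i,j} ↦ x_i^{-1}x_{i+1} for i ≥ 1. Then for the edge of the tangent cone C_v with direction vector ε associated to the pair (a,b) (1 ≤ a ≤ b ≤ n−1), one has F(t^ε) = x_{b+1}/x_a if w^{-1}(a) < w^{-1}(b+1), and F(t^ε) = x_a/x_{b+1} otherwise; in both cases F(t^ε) = w(x_{max(w^{-1}(a),w^{-1}(b+1))}/x_{min(w^{-1}(a),w^{-1}(b+1))}). -/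
open scoped BigOperators Classical

/-- Auxiliary: the variable x_i extended to natural-number index, 1 out of range. -/
noncomputable def fxAux (n : ℕ) (r : ℕ) : Kx n := if h : r < n then xv n ⟨r, h⟩ else 1

lemma xv_ne_zero (n : ℕ) (i : Fin n) : xv n i ≠ 0 := by
  intro h
  have := (map_eq_zero_iff (algebraMap (MvPolynomial (Fin n) ℚ) (Kx n))
    (IsFractionRing.injective _ _)).mp h
  exact MvPolynomial.X_ne_zero i this

lemma fxAux_ne_zero (n : ℕ) (r : ℕ) : fxAux n r ≠ 0 := by
  unfold fxAux
  split
  · exact xv_ne_zero n _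
  · exact one_ne_zero

lemma telescAux (n : ℕ) (a : ℕ) (ha : 1 ≤ a) :
    ∀ b, a ≤ b →
      ∏ r ∈ Finset.Icc a b, ((fxAux n (r - 1))⁻¹ * fxAux n r)
        = (fxAux n (a - 1))⁻¹ * fxAux n b := by
  intro b
  induction b with
  | zero => intro h; omega
  | succ b ih =>
      intro hab
      rcases Nat.lt_or_ge a (b + 1) with h | h
      · have hab' : a ≤ b := by omega
        rw [Finset.prod_Icc_succ_top hab, ih hab']
        have hb0 : fxAux n b ≠ 0 := fxAux_ne_zero n b
        have : b + 1 - 1 = b := by omega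
        rw [this, mul_assoc, ← mul_assoc (fxAux n b), mul_inv_cancel₀ hb0, one_mul]
      · have : a = b + 1 := by omega
        subst this
        simp

lemma xsub_row (n : ℕ) (p : GTIdx n) (hp : 1 ≤ (p.1 : ℕ)) :
    xsub n p = (fxAux n ((p.1 : ℕ) - 1))⁻¹ * fxAux n (p.1 : ℕ) := by
  unfold xsub fxAux
  rw [if_neg (by omega)]
  rw [dif_pos (Nat.lt_of_le_of_lt (Nat.sub_le _ _) p.1.isLt), dif_pos p.1.isLt]

/-- for the edge direction ε of the tangent cone at a simplicial vertex
associated to the pair (a,b), F(t^ε) = x_{b+1}/x_a if w⁻¹(a) < w⁻¹(b+1) and x_a/x_{b+1}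
otherwise; in both cases it equals w(x_{max(w⁻¹(a),w⁻¹(b+1))}/x_{min(w⁻¹(a),w⁻¹(b+1))})
(all written with 0-based indices: 1-based a, b+1 become the Fin-indices a-1 and b). -/
theorem statement11 (n : ℕ) (lam : Fin n → ℤ)
    (hreg : ∀ i j : Fin n, i < j → lam j < lam i)
    (A : GTIdx n → ℝ) (hA : IsSimpVertex n (fun i => (lam i : ℝ)) A)
    (w : Equiv.Perm (Fin n))
    (hw : ∀ i : Fin n, rowM A (i : ℕ) = ((lam (w⁻¹ i) : ℝ)) ::ₘ rowM A ((i : ℕ) + 1))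
    (a b : ℕ) (ha : 1 ≤ a) (hab : a ≤ b) (hb : b ≤ n - 1)
    (ε : GTIdx n → ℤ)
    (hedge : IsEdgeDir (tangentCone (GTPoly n (fun i => (lam i : ℝ))) A) A
      (fun p => (ε p : ℝ)))
    (hpat : simpDirZ n a b
      (if w⁻¹ ⟨a - 1, by omega⟩ < w⁻¹ ⟨b, by omega⟩ then (1 : ℤ) else -1) ε) :
    Fmon n ε
      = (if w⁻¹ ⟨a - 1, by omega⟩ < w⁻¹ ⟨b, by omega⟩
         then xv n ⟨b, by omega⟩ / xv n ⟨a - 1, by omega⟩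
         else xv n ⟨a - 1, by omega⟩ / xv n ⟨b, by omega⟩) ∧
    Fmon n ε
      = xv n (w (max (w⁻¹ ⟨a - 1, by omega⟩) (w⁻¹ ⟨b, by omega⟩)))
        / xv n (w (min (w⁻¹ ⟨a - 1, by omega⟩) (w⁻¹ ⟨b, by omega⟩))) := by
  classical
  have hn : 2 ≤ n := by omega
  have hb' : b < n := by omega
  have ha' : a - 1 < n := by omega
  obtain ⟨hsupp, huniq, hval⟩ := hpat
  set i1 : Fin n := ⟨a - 1, ha'⟩ with hi1
  set i2 : Fin n := ⟨b, hb'⟩ with hi2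
  set c : ℤ := if w⁻¹ i1 < w⁻¹ i2 then (1 : ℤ) else -1 with hc
  -- Step 1: product over the support
  have hfm : Fmon n ε
      = ∏ p ∈ Finset.univ.filter (fun p => ε p ≠ 0), xsub n p ^ ε p := by
    unfold Fmon
    refine (Finset.prod_subset (Finset.filter_subset _ _) ?_).symm
    intro p _ hp
    simp only [Finset.mem_filter, Finset.mem_univ, true_and, not_not] at hp
    rw [hp, zpow_zero]
  -- Step 2: reindex by rows
  have hstep : Fmon n ε
      = ∏ r ∈ Finset.Icc a b, ((fxAux n (r - 1))⁻¹ * fxAux n r) ^ c := by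
    rw [hfm]
    refine Finset.prod_bij (fun p _ => (p.1 : ℕ)) ?_ ?_ ?_ ?_
    · intro p hp
      simp only [Finset.mem_filter, Finset.mem_univ, true_and] at hp
      obtain ⟨_, h1, h2⟩ := hsupp p hp
      exact Finset.mem_Icc.mpr ⟨h1, h2⟩
    · intro p hp q hq hpq
      simp only [Finset.mem_filter, Finset.mem_univ, true_and] at hp hq
      obtain ⟨_, h1, h2⟩ := hsupp p hp
      have := huniq (p.1 : ℕ) h1 h2
      exact ((this.unique ⟨rfl, hp⟩ ⟨hpq.symm, hq⟩))
    · intro r hr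
      rw [Finset.mem_Icc] at hr
      obtain ⟨p, ⟨hpr, hpne⟩, _⟩ := huniq r hr.1 hr.2
      exact ⟨p, by simp [hpne], hpr⟩
    · intro p hp
      simp only [Finset.mem_filter, Finset.mem_univ, true_and] at hp
      obtain ⟨_, h1, h2⟩ := hsupp p hp
      rw [hval p hp, xsub_row n p (by omega)]
  -- Step 3: telescope
  have htel : Fmon n ε = ((fxAux n (a - 1))⁻¹ * fxAux n b) ^ c := by
    rw [hstep]
    have hcases : c = 1 ∨ c = -1 := by rw [hc]; split <;> simp
    rcases hcases with h | h
    · simp only [h, zpow_one]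
      exact telescAux n a ha b hab
    · simp only [h, zpow_neg_one, Finset.prod_inv_distrib, telescAux n a ha b hab]

  have hfa : fxAux n (a - 1) = xv n i1 := by rw [fxAux, dif_pos ha']
  have hfb : fxAux n b = xv n i2 := by rw [fxAux, dif_pos hb']
  by_cases hlt : w⁻¹ i1 < w⁻¹ i2
  · have hc1 : c = 1 := by rw [hc, if_pos hlt]
    have hmain : Fmon n ε = xv n i2 / xv n i1 := by
      rw [htel, hc1, zpow_one, hfa, hfb, div_eq_mul_inv, mul_comm]
    constructor
    · rw [if_pos hlt]; exact hmain
    · rw [max_eq_right hlt.le, min_eq_left hlt.le,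
        Equiv.Perm.coe_inv, Equiv.apply_symm_apply, Equiv.apply_symm_apply]
      exact hmain
  · have hc1 : c = -1 := by rw [hc, if_neg hlt]
    have hmain : Fmon n ε = xv n i1 / xv n i2 := by
      rw [htel, hc1, hfa, hfb, zpow_neg_one, mul_inv, inv_inv, div_eq_mul_inv]
    constructor
    · rw [if_neg hlt]; exact hmain
    · rw [max_eq_left (le_of_not_gt hlt), min_eq_right (le_of_not_gt hlt),
        Equiv.Perm.coe_inv, Equiv.apply_symm_apply, Equiv.apply_symm_apply]
      exact hmain
end

section
/- For a vertex v of GT_λ (λ regular), the tangent cone decomposes as the direct Minkowski sum C_v = v + Σ_Δ C_Δ over the connected components Δ of Γ_v, where C_Δ is the cone of vectors supported on the nodes of Δ, vanishing at the top node of Δ, and satisfying the interlacing inequalities along edges of Δ; consequently σ(C_v) = t^v · Π_Δ σ(C_Δ). -/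
open scoped BigOperators Classical

open scoped Pointwise

section Machinery
variable (ι : Type) [Fintype ι]

theorem tmon_ne_zero (u : ι → ℤ) : tmon ι u ≠ 0 := by
  rw [tmon]
  exact Finset.prod_ne_zero_iff.2 fun i _ => zpow_ne_zero _ (by
    simp [IsFractionRing.to_map_eq_zero_iff, MvPolynomial.X_ne_zero])

theorem tmon_add (u v : ι → ℤ) : tmon ι (u+v) = tmon ι u * tmon ι v := by
  rw [tmon, tmon, tmon, ← Finset.prod_mul_distrib]
  refine Finset.prod_congr rfl fun i _ => ?_
  rw [Pi.add_apply, zpow_add₀]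
  simp [IsFractionRing.to_map_eq_zero_iff, MvPolynomial.X_ne_zero]

noncomputable def tmonHom : Multiplicative (ι → ℤ) →* KK ι where
  toFun u := tmon ι (Multiplicative.toAdd u)
  map_one' := by simp [tmon]
  map_mul' u v := tmon_add ι _ _

noncomputable def LL : AddMonoidAlgebra ℚ (ι → ℤ) →ₐ[ℚ] KK ι :=
  AddMonoidAlgebra.lift ℚ (KK ι) (ι → ℤ) (tmonHom ι)

theorem LL_apply (h : AddMonoidAlgebra ℚ (ι → ℤ)) :
    LL ι h = ∑ a ∈ h.coeff.support, (h.coeff a : KK ι) * tmon ι a := by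
  rw [LL, AddMonoidAlgebra.lift_apply]
  rw [Finsupp.sum]
  refine Finset.sum_congr rfl fun a _ => ?_
  rw [Algebra.smul_def]
  simp [tmonHom]

noncomputable def toN (x : ι → ℤ) : ι →₀ ℕ :=
  Finsupp.equivFunOnFinite.symm (fun i => (x i).toNat)

theorem toN_apply (x : ι → ℤ) (i : ι) : toN ι x i = (x i).toNat := rfl

theorem tmon_nonneg_eq (x : ι → ℤ) (hx : ∀ i, 0 ≤ (x : ι → ℤ) i) :
    tmon ι x = algebraMap (MvPolynomial ι ℚ) (KK ι) (MvPolynomial.monomial (toN ι x) 1) := by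
  have h1 : (∏ i, MvPolynomial.X i ^ (toN ι x i) : MvPolynomial ι ℚ)
      = MvPolynomial.monomial (toN ι x) 1 := by
    rw [← MvPolynomial.prod_X_pow_eq_monomial]
    exact (Finset.prod_subset (Finset.subset_univ _) (fun i _ hi => by
      simp [Finsupp.notMem_support_iff.1 hi])).symm
  rw [← h1, map_prod, tmon]
  refine Finset.prod_congr rfl fun i _ => ?_
  rw [map_pow, toN_apply, ← zpow_natCast, Int.toNat_of_nonneg (hx i)]

theorem LL_injective : Function.Injective (LL ι) := by
  rw [injective_iff_map_eq_zero (LL ι)]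
  intro h hL
  by_contra hne
  have hsupp : h.coeff.support.Nonempty := Finsupp.support_nonempty_iff.2 (fun h0 => hne (AddMonoidAlgebra.coeff_eq_zero.1 h0))
  set m : ι → ℤ := fun i => h.coeff.support.sup' hsupp (fun b => -(b i)) with hm
  have hbm : ∀ b ∈ h.coeff.support, ∀ i, 0 ≤ (b + m) i := by
    intro b hb i
    have h4 : -(b i) ≤ h.coeff.support.sup' hsupp (fun b => -(b i)) :=
      Finset.le_sup' (fun b => -(b i)) hb
    simp only [Pi.add_apply, hm]
    linarith
  set P : MvPolynomial ι ℚ :=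
    ∑ b ∈ h.coeff.support, MvPolynomial.monomial (toN ι (b + m)) (h.coeff b) with hP
  have hmapP : algebraMap (MvPolynomial ι ℚ) (KK ι) P = LL ι h * tmon ι m := by
    rw [LL_apply, Finset.sum_mul, hP, map_sum]
    refine Finset.sum_congr rfl fun b hb => ?_
    rw [mul_assoc, ← tmon_add, tmon_nonneg_eq ι _ (hbm b hb)]
    have : MvPolynomial.monomial (toN ι (b+m)) (h.coeff b)
        = MvPolynomial.C (h.coeff b) * MvPolynomial.monomial (toN ι (b+m)) 1 := by
      rw [MvPolynomial.C_mul_monomial, mul_one]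
    rw [this, map_mul]
    congr 1
    exact eq_ratCast ((algebraMap (MvPolynomial ι ℚ) (KK ι)).comp (MvPolynomial.C)) (h.coeff b)
  rw [hL, zero_mul] at hmapP
  have hP0 : P = 0 := IsFractionRing.injective (MvPolynomial ι ℚ) (KK ι) (by simpa using hmapP)
  obtain ⟨b0, hb0⟩ := hsupp
  have hco : MvPolynomial.coeff (toN ι (b0 + m)) P = h.coeff b0 := by
    rw [hP, MvPolynomial.coeff_sum]
    rw [Finset.sum_eq_single b0]
    · simp [MvPolynomial.coeff_monomial]
    · intro b hb hbne
      rw [MvPolynomial.coeff_monomial, if_neg]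
      intro he
      apply hbne
      funext i
      have h1 := congrFun (congrArg (fun f : ι →₀ ℕ => (f : ι → ℕ)) he) i
      simp only [toN_apply] at h1
      have h2 := hbm b hb i
      have h3 := hbm b0 hb0 i
      simp only [Pi.add_apply] at h1 h2 h3
      omega
    · intro hb; exact absurd hb0 hb
  rw [hP0] at hco
  simp only [MvPolynomial.coeff_zero] at hco
  exact Finsupp.mem_support_iff.1 hb0 hco.symm

variable {ι}

def toAMA (x : (ι → ℤ) →₀ ℚ) : AddMonoidAlgebra ℚ (ι → ℤ) := AddMonoidAlgebra.ofCoeff x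

instance : Coe ((ι → ℤ) →₀ ℚ) (AddMonoidAlgebra ℚ (ι → ℤ)) := ⟨toAMA⟩

theorem toAMA_coeff (x : AddMonoidAlgebra ℚ (ι → ℤ)) : toAMA x.coeff = x := rfl

@[simp] theorem toAMA_apply (x : (ι → ℤ) →₀ ℚ) (a : ι → ℤ) : (toAMA x).coeff a = x a := rfl
@[simp] theorem toAMA_support (x : (ι → ℤ) →₀ ℚ) : (toAMA x).coeff.support = x.support := rfl

theorem LL_eq (q : (ι → ℤ) →₀ ℚ) :
    (∑ b ∈ q.support, (q b : KK ι) * tmon ι b) = LL ι q := (LL_apply ι q).symm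

theorem LL_ne_zero {q : (ι → ℤ) →₀ ℚ} (hq : q ≠ 0) : LL ι q ≠ 0 := by
  intro h
  exact hq (AddMonoidAlgebra.ofCoeff_eq_zero.1 (LL_injective ι (by rw [map_zero]; exact h)))

/-- convolution over the second factor's support (or any superset). -/
theorem mul_apply_right (h h' : AddMonoidAlgebra ℚ (ι → ℤ)) (T : Finset (ι → ℤ))
    (hT : h'.coeff.support ⊆ T) (a : ι → ℤ) :
    (h * h').coeff a = ∑ b ∈ T, h.coeff (a - b) * h'.coeff b := by
  have step1 : (h * h').coeff a
      = ∑ v ∈ h'.coeff.support, ∑ u ∈ h.coeff.support, if u + v = a then h.coeff u * h'.coeff v else 0 := by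
    rw [AddMonoidAlgebra.coeff_mul]
    simp only [Finsupp.sum]
    exact Finset.sum_comm
  rw [step1]
  rw [Finset.sum_subset hT (fun b _ hb => by
    simp [Finsupp.notMem_support_iff.1 hb])]
  refine Finset.sum_congr rfl fun v hv => ?_
  by_cases hmem : a - v ∈ h.coeff.support
  · rw [Finset.sum_eq_single (a - v)]
    · rw [if_pos (by abel)]
    · intro u hu hne
      rw [if_neg]
      intro he
      exact hne (by rw [← he]; abel)
    · intro hc; exact absurd hmem hc
  · rw [Finset.sum_eq_zero, Finsupp.notMem_support_iff.1 hmem, zero_mul]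
    intro u hu
    rw [if_neg]
    intro he
    exact hmem (by rw [← he, add_sub_cancel_right]; exact hu)

theorem mul_apply_right' (h h' : AddMonoidAlgebra ℚ (ι → ℤ)) (a : ι → ℤ) :
    (h * h').coeff a = ∑ b ∈ h'.coeff.support, h.coeff (a - b) * h'.coeff b :=
  mul_apply_right h h' h'.coeff.support (le_refl _) a

/-- uniqueness of the rational function representing a given series. -/
theorem represents_unique {r r' : KK ι} {f : (ι → ℤ) → ℚ}
    (h1 : Represents r f) (h2 : Represents r' f) : r = r' := by
  obtain ⟨q, hq0, g, hg, hrq⟩ := h1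
  obtain ⟨q', hq0', g', hg', hrq'⟩ := h2
  have key : toAMA q' * toAMA g = toAMA q * toAMA g' := by
    ext a
    rw [mul_comm, mul_apply_right' (toAMA g) (toAMA q') a,
        mul_comm, mul_apply_right' (toAMA g') (toAMA q) a]
    simp only [toAMA_apply, toAMA_support]
    have e1 : ∑ v ∈ q'.support, g (a - v) * q' v
        = ∑ v ∈ q'.support, ∑ u ∈ q.support, q u * f (a - v - u) * q' v := by
      refine Finset.sum_congr rfl fun v _ => ?_
      rw [hg (a - v), Finset.sum_mul]
    have e2 : ∑ u ∈ q.support, g' (a - u) * q u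
        = ∑ u ∈ q.support, ∑ v ∈ q'.support, q' v * f (a - u - v) * q u := by
      refine Finset.sum_congr rfl fun u _ => ?_
      rw [hg' (a - u), Finset.sum_mul]
    rw [e1, e2, Finset.sum_comm]
    refine Finset.sum_congr rfl fun u _ => Finset.sum_congr rfl fun v _ => ?_
    rw [show a - v - u = a - u - v by abel]
    ring
  have keyL := congrArg (LL ι) key
  rw [map_mul, map_mul] at keyL
  rw [LL_eq, LL_eq] at hrq
  rw [LL_eq, LL_eq] at hrq'
  have hq : LL ι q ≠ 0 := LL_ne_zero hq0
  have hq' : LL ι q' ≠ 0 := LL_ne_zero hq0'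
  refine mul_right_cancel₀ (mul_ne_zero hq hq') ?_
  calc r * (LL ι q * LL ι q') = LL ι q' * (r * LL ι q) := by ring
    _ = LL ι q' * LL ι g := by rw [hrq]
    _ = LL ι q * LL ι g' := keyL
    _ = LL ι q * (r' * LL ι q') := by rw [hrq']
    _ = r' * (LL ι q * LL ι q') := by ring

noncomputable def proj (B : Set ι) (a : ι → ℤ) : ι → ℤ := fun i => if i ∈ B then a i else 0

theorem LL_single (v : ι → ℤ) (c : ℚ) :
    LL ι (toAMA (Finsupp.single v c)) = (c : KK ι) * tmon ι v := by
  rw [LL]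
  have : toAMA (Finsupp.single v c) = AddMonoidAlgebra.single v c := rfl
  rw [this, AddMonoidAlgebra.lift_single]
  rw [Algebra.smul_def]
  congr 1

theorem shift_apply (g : (ι → ℤ) →₀ ℚ) (v : ι → ℤ) (a : ι → ℤ) :
    (toAMA g * toAMA (Finsupp.single v 1)).coeff a = g (a - v) := by
  rw [mul_apply_right (toAMA g) (toAMA (Finsupp.single v 1)) {v} (by
    rw [toAMA_support]; exact Finsupp.support_single_subset) a]
  simp

theorem represents_shift {r : KK ι} {f : (ι → ℤ) → ℚ} (h : Represents r f) (v : ι → ℤ) :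
    Represents (tmon ι v * r) (fun a => f (a - v)) := by
  obtain ⟨q, hq0, g, hg, hrq⟩ := h
  refine ⟨q, hq0, (toAMA g * toAMA (Finsupp.single v 1)).coeff, fun a => ?_, ?_⟩
  · rw [shift_apply, hg (a - v)]
    refine Finset.sum_congr rfl fun b _ => ?_
    rw [show a - v - b = a - b - v by abel]
  · rw [LL_eq, LL_eq, toAMA_coeff (toAMA g * toAMA (Finsupp.single v 1)), map_mul, LL_single, Rat.cast_one, one_mul]
    rw [LL_eq q, LL_eq g] at hrq
    calc tmon ι v * r * LL ι q = tmon ι v * (r * LL ι q) := by ring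
      _ = tmon ι v * LL ι g := by rw [hrq]
      _ = LL ι g * tmon ι v := by ring

theorem conv_expand (q q' : (ι → ℤ) →₀ ℚ) (ψ : (ι → ℤ) → ℚ) :
    ∑ b ∈ (toAMA q * toAMA q').coeff.support, (toAMA q * toAMA q').coeff b * ψ b
      = ∑ u ∈ q.support, ∑ v ∈ q'.support, q u * q' v * ψ (u + v) := by
  classical
  have hsub : (toAMA q * toAMA q').coeff.support ⊆ q.support + q'.support := by
    simpa using AddMonoidAlgebra.support_coeff_mul_subset (toAMA q) (toAMA q')
  rw [Finset.sum_subset hsub (fun b _ hb => by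
    rw [Finsupp.notMem_support_iff.1 hb, zero_mul])]
  have e1 : ∀ b, (toAMA q * toAMA q').coeff b * ψ b
      = ∑ u ∈ q.support, ∑ v ∈ q'.support, (if u + v = b then q u * q' v * ψ b else 0) := by
    intro b
    rw [AddMonoidAlgebra.coeff_mul]
    simp only [Finsupp.sum]
    rw [Finset.sum_mul]
    refine Finset.sum_congr rfl fun u _ => ?_
    rw [Finset.sum_mul]
    refine Finset.sum_congr rfl fun v _ => ?_
    rw [ite_mul, zero_mul, toAMA_apply, toAMA_apply]
  calc ∑ b ∈ q.support + q'.support, (toAMA q * toAMA q').coeff b * ψ b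
      = ∑ b ∈ q.support + q'.support, ∑ u ∈ q.support, ∑ v ∈ q'.support,
          (if u + v = b then q u * q' v * ψ b else 0) :=
        Finset.sum_congr rfl fun b _ => e1 b
    _ = ∑ u ∈ q.support, ∑ v ∈ q'.support, ∑ b ∈ q.support + q'.support,
          (if u + v = b then q u * q' v * ψ b else 0) := by
        rw [Finset.sum_comm]
        refine Finset.sum_congr rfl fun u _ => Finset.sum_comm
    _ = ∑ u ∈ q.support, ∑ v ∈ q'.support, q u * q' v * ψ (u + v) := by
        refine Finset.sum_congr rfl fun u hu => Finset.sum_congr rfl fun v hv => ?_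
        rw [Finset.sum_ite_eq (q.support + q'.support) (u + v)]
        rw [if_pos (Finset.add_mem_add hu hv)]

theorem represents_mul {B B' : Set ι} (hd : Disjoint B B')
    {f f' : (ι → ℤ) → ℚ} (hf : ∀ x, f x ≠ 0 → ∀ i ∉ B, x i = 0)
    (hf' : ∀ x, f' x ≠ 0 → ∀ i ∉ B', x i = 0)
    {r r' : KK ι} (h1 : Represents r f) (h2 : Represents r' f') :
    Represents (r * r') (fun a => f (proj B a) * f' (a - proj B a)) := by
  classical
  obtain ⟨q, hq0, g, hg, hrq⟩ := h1
  obtain ⟨q', hq0', g', hg', hrq'⟩ := h2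
  refine ⟨(toAMA q * toAMA q').coeff, ?_, (toAMA g * toAMA g').coeff, fun a => ?_, ?_⟩
  · intro h0
    have : LL ι (toAMA q * toAMA q') = 0 := by rw [show toAMA q * toAMA q' = 0 from AddMonoidAlgebra.coeff_eq_zero.1 h0, map_zero]
    rw [map_mul] at this
    exact mul_ne_zero (LL_ne_zero hq0) (LL_ne_zero hq0') this
  · -- the convolution identity
    rw [conv_expand q q' (fun b => f (proj B (a - b)) * f' ((a - b) - proj B (a - b)))]
    set T : Finset (ι → ℤ) := g'.support ∪
      (q.support ×ˢ q'.support).image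
        (fun uv : (ι → ℤ) × (ι → ℤ) =>
          uv.2 + ((a - uv.1 - uv.2) - proj B (a - uv.1 - uv.2))) with hT
    rw [mul_apply_right (toAMA g) (toAMA g') T (by rw [hT]; exact Finset.subset_union_left) a]
    have key : ∀ u ∈ q.support, ∀ v ∈ q'.support,
        ∑ b' ∈ T, f (a - b' - u) * f' (b' - v)
          = f (proj B (a - u - v)) * f' ((a - u - v) - proj B (a - u - v)) := by
      intro u hu v hv
      set w : ι → ℤ := a - u - v with hw
      have hb0 : v + (w - proj B w) ∈ T := by
        rw [hT]
        refine Finset.mem_union_right _ (Finset.mem_image.2 ⟨(u, v), Finset.mk_mem_product hu hv, rfl⟩)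
      rw [Finset.sum_eq_single_of_mem (v + (w - proj B w)) hb0]
      · congr 1
        · congr 1
          rw [hw]; abel
        · congr 1; abel
      · intro b' _ hne
        by_contra hne0
        rcases mul_ne_zero_iff.1 hne0 with ⟨hL, hR⟩
        have h3 := hf _ hL
        have h4 := hf' _ hR
        apply hne
        funext i
        by_cases hiB : i ∈ B
        · have hiB' : i ∉ B' := fun hmem => (hd.le_bot ⟨hiB, hmem⟩ : False)
          have := h4 i hiB'
          simp only [Pi.sub_apply] at this
          have hproj : proj B w i = w i := by rw [proj, if_pos hiB]
          simp only [Pi.add_apply, Pi.sub_apply, hproj]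
          omega
        · have := h3 i hiB
          simp only [Pi.sub_apply] at this
          have hproj : proj B w i = 0 := by rw [proj, if_neg hiB]
          simp only [Pi.add_apply, Pi.sub_apply, hproj]
          have hwi : w i = a i - u i - v i := by rw [hw]; rfl
          omega
    calc ∑ b' ∈ T, (toAMA g).coeff (a - b') * (toAMA g').coeff b'
        = ∑ b' ∈ T, ∑ u ∈ q.support, ∑ v ∈ q'.support,
            q u * q' v * (f (a - b' - u) * f' (b' - v)) := by
          refine Finset.sum_congr rfl fun b' _ => ?_
          rw [toAMA_apply, toAMA_apply, hg (a - b'), hg' b', Finset.sum_mul_sum]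
          refine Finset.sum_congr rfl fun u _ => Finset.sum_congr rfl fun v _ => by ring
      _ = ∑ u ∈ q.support, ∑ v ∈ q'.support, ∑ b' ∈ T,
            q u * q' v * (f (a - b' - u) * f' (b' - v)) := by
          rw [Finset.sum_comm]
          refine Finset.sum_congr rfl fun u _ => Finset.sum_comm
      _ = ∑ u ∈ q.support, ∑ v ∈ q'.support,
            q u * q' v * (f (proj B (a - (u + v))) * f' ((a - (u + v)) - proj B (a - (u + v)))) := by
          refine Finset.sum_congr rfl fun u hu => Finset.sum_congr rfl fun v hv => ?_
          rw [← Finset.mul_sum, key u hu v hv]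
          rw [show a - (u + v) = a - u - v by abel]
  · rw [LL_eq, LL_eq, toAMA_coeff (toAMA q * toAMA q'), toAMA_coeff (toAMA g * toAMA g'), map_mul, map_mul]
    rw [LL_eq, LL_eq] at hrq
    rw [LL_eq, LL_eq] at hrq'
    calc r * r' * (LL ι q * LL ι q') = (r * LL ι q) * (r' * LL ι q') := by ring
      _ = LL ι g * LL ι g' := by rw [hrq, hrq']

noncomputable def CSfun {κ : Type} (Bl : κ → Set ι) (fc : κ → ((ι → ℤ) → ℚ))
    (s : Finset κ) : (ι → ℤ) → ℚ :=
  fun a => if (∀ i, (∀ c ∈ s, i ∉ Bl c) → a i = 0)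
    then ∏ c ∈ s, fc c (proj (Bl c) a) else 0

theorem represents_empty {κ : Type} (Bl : κ → Set ι) (fc : κ → ((ι → ℤ) → ℚ)) :
    Represents (1 : KK ι) (CSfun Bl fc (∅ : Finset κ)) := by
  classical
  refine ⟨Finsupp.single 0 1, ?_, Finsupp.single 0 1, fun a => ?_, by rw [one_mul]⟩
  · intro h0
    have := congrFun (congrArg (fun f : (ι → ℤ) →₀ ℚ => (f : (ι → ℤ) → ℚ)) h0) 0
    simp at this
  · rw [Finsupp.support_single_ne_zero 0 one_ne_zero, Finset.sum_singleton,
      Finsupp.single_eq_same, one_mul, sub_zero]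
    rw [CSfun]
    simp only [Finset.notMem_empty, false_implies, implies_true, forall_const,
      Finset.prod_empty]
    rw [Finsupp.single_apply]
    by_cases ha : a = 0
    · rw [if_pos (by rw [ha]), if_pos (by intro i; rw [ha]; rfl)]
    · rw [if_neg (fun h => ha h.symm), if_neg (show ¬∀ i : ι, a i = 0 from fun h => ha (funext h))]

theorem represents_CS {κ : Type} (Bl : κ → Set ι)
    (hdis : ∀ c c' : κ, c ≠ c' → Disjoint (Bl c) (Bl c'))
    (fc : κ → ((ι → ℤ) → ℚ)) (hfc : ∀ c x, fc c x ≠ 0 → ∀ i ∉ Bl c, x i = 0)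
    (gc : κ → KK ι) (hgc : ∀ c, Represents (gc c) (fc c)) (s : Finset κ) :
    Represents (∏ c ∈ s, gc c) (CSfun Bl fc s) := by
  classical
  induction s using Finset.induction_on with
  | empty => rw [Finset.prod_empty]; exact represents_empty Bl fc
  | @insert c s hcs ih =>
    rw [Finset.prod_insert hcs]
    have hdisU : Disjoint (Bl c) (⋃ c' ∈ s, Bl c') := by
      rw [Set.disjoint_iUnion₂_right]
      intro c' hc'
      exact hdis c c' (fun h => hcs (h ▸ hc'))
    have hfc' : ∀ x, CSfun Bl fc s x ≠ 0 → ∀ i ∉ (⋃ c' ∈ s, Bl c'), x i = 0 := by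
      intro x hx i hi
      rw [CSfun] at hx
      by_cases hcond : ∀ i, (∀ c' ∈ s, i ∉ Bl c') → x i = 0
      · exact hcond i (fun c' hc' hic' => hi (Set.mem_biUnion hc' hic'))
      · rw [if_neg hcond] at hx; exact absurd rfl hx
    have hmul := represents_mul hdisU (hfc c) hfc' (hgc c) ih
    have heq : (fun a => fc c (proj (Bl c) a) * CSfun Bl fc s (a - proj (Bl c) a))
        = CSfun Bl fc (insert c s) := by
      funext a
      by_cases hcond : ∀ i, (∀ c' ∈ insert c s, i ∉ Bl c') → a i = 0
      · have hcond' : ∀ i, (∀ c' ∈ s, i ∉ Bl c') → (a - proj (Bl c) a) i = 0 := by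
          intro i hi
          by_cases hiB : i ∈ Bl c
          · simp [proj, hiB]
          · have ha0 : a i = 0 := hcond i (by
              intro c' hc'
              rcases Finset.mem_insert.1 hc' with h | h
              · rwa [h]
              · exact hi c' h)
            simp [proj, hiB, ha0]
        rw [CSfun, CSfun]
        rw [if_pos hcond', if_pos hcond, Finset.prod_insert hcs]
        congr 1
        refine Finset.prod_congr rfl fun c' hc' => ?_
        congr 1
        funext i
        by_cases hiB' : i ∈ Bl c'
        · have hiB : i ∉ Bl c := fun hiB =>
            (hdis c c' (fun h => hcs (h ▸ hc'))).le_bot ⟨hiB, hiB'⟩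
          simp [proj, hiB', hiB]
        · simp [proj, hiB']
      · rw [CSfun, CSfun]
        rw [if_neg hcond]
        push_neg at hcond
        obtain ⟨i, hi, hai⟩ := hcond
        have hiBc : i ∉ Bl c := hi c (Finset.mem_insert_self c s)
        rw [if_neg, mul_zero]
        intro hcond'
        have := hcond' i (fun c' hc' => hi c' (Finset.mem_insert_of_mem hc'))
        simp only [Pi.sub_apply, proj, if_neg hiBc, sub_zero] at this
        exact hai this
    rwa [heq] at hmul

end Machinery

section GTPart
variable {n : ℕ}

theorem entryR_nat (x : GTIdx n → ℝ) {i j : ℕ} (hi : i < n) (hj : j < n) :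
    entryR x i j = x (⟨i, hi⟩, ⟨j, hj⟩) := by
  rw [entryR, dif_pos ⟨hi, hj⟩]

theorem entryR_pair (x : GTIdx n → ℝ) (p : GTIdx n) : entryR x p.1 p.2 = x p := by
  rw [entryR, dif_pos ⟨p.1.isLt, p.2.isLt⟩]

theorem entryR_add_smul (x ε : GTIdx n → ℝ) (s : ℝ) (i j : ℕ) :
    entryR (x + s • ε) i j = entryR x i j + s * entryR ε i j := by
  rw [entryR, entryR, entryR]
  by_cases h : i < n ∧ j < n
  · rw [dif_pos h, dif_pos h, dif_pos h]; simp
  · rw [dif_neg h, dif_neg h, dif_neg h]; ring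

/-- interlacing along an up-edge, for any element of the polytope. -/
theorem gt_edge_le {lamR : Fin n → ℝ} {x : GTIdx n → ℝ} (hx : x ∈ GTPoly n lamR)
    {p q : GTIdx n} (h : upEdge n p q) :
    ((q.2 : ℕ) = (p.2 : ℕ) → x p ≤ x q) ∧ ((q.2 : ℕ) = (p.2 : ℕ) + 1 → x q ≤ x p) := by
  obtain ⟨hp, hq, h1, _⟩ := h
  have hlt : (q.1 : ℕ) + 1 + (p.2 : ℕ) < n := by
    have := hp; rw [GTValid] at this; omega
  have h2 := hx.2.1 q.1 p.2 hlt
  constructor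
  · intro he
    have := h2.1
    rw [show ((q.1 : ℕ) + 1) = (p.1 : ℕ) from h1] at this
    rw [entryR_pair] at this
    rw [show ((p.2 : ℕ)) = (q.2 : ℕ) from he.symm] at this
    rwa [entryR_pair] at this
  · intro he
    have := h2.2
    rw [show ((q.1 : ℕ) + 1) = (p.1 : ℕ) from h1] at this
    rw [show ((p.2 : ℕ) + 1) = (q.2 : ℕ) from he.symm] at this
    rw [entryR_pair, entryR_pair] at this
    exact this

theorem row0_eq {lamR : Fin n → ℝ} {x : GTIdx n → ℝ} (hx : x ∈ GTPoly n lamR)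
    {p : GTIdx n} (h0 : (p.1 : ℕ) = 0) : x p = lamR p.2 := by
  have := hx.1 p.2
  rw [show ((0 : ℕ)) = (p.1 : ℕ) from h0.symm] at this
  rwa [entryR_pair] at this

/-- small positive multiplier lemma -/
theorem exists_small_mul {κ' : Type} [Fintype κ'] (gap dd : κ' → ℝ)
    (hg : ∀ k, 0 ≤ gap k) (h0 : ∀ k, gap k = 0 → dd k ≤ 0) :
    ∃ s : ℝ, 0 < s ∧ ∀ k, s * dd k ≤ gap k := by
  classical
  set bound : κ' → ℝ := fun k => if dd k ≤ 0 then 1 else gap k / dd k with hb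
  set S : Finset ℝ := insert 1 (Finset.univ.image bound) with hS
  have hSne : S.Nonempty := ⟨1, Finset.mem_insert_self _ _⟩
  have hall : ∀ x ∈ S, 0 < x := by
    intro x hx
    rw [hS] at hx
    rcases Finset.mem_insert.1 hx with h | h
    · rw [h]; norm_num
    · obtain ⟨k, _, hk⟩ := Finset.mem_image.1 h
      rw [← hk, hb]
      show 0 < if dd k ≤ 0 then (1:ℝ) else gap k / dd k
      by_cases hdd : dd k ≤ 0
      · rw [if_pos hdd]; norm_num
      · rw [if_neg hdd]
        push_neg at hdd
        have hgap : 0 < gap k :=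
          lt_of_le_of_ne (hg k) (fun he => absurd (h0 k he.symm) (not_le.2 hdd))
        exact div_pos hgap hdd
  have hpos : 0 < S.min' hSne := hall _ (S.min'_mem hSne)
  refine ⟨S.min' hSne, hpos, fun k => ?_⟩
  by_cases hdd : dd k ≤ 0
  · calc S.min' hSne * dd k ≤ 0 := mul_nonpos_of_nonneg_of_nonpos hpos.le hdd
      _ ≤ gap k := hg k
  · push_neg at hdd
    have hble : S.min' hSne ≤ bound k :=
      Finset.min'_le _ _ (Finset.mem_insert_of_mem
        (Finset.mem_image_of_mem bound (Finset.mem_univ k)))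
    rw [hb] at hble
    simp only [if_neg (not_le.2 hdd)] at hble
    exact (le_div_iff₀ hdd).1 hble

theorem part1 {lamR : Fin n → ℝ} {A : GTIdx n → ℝ} (hA : A ∈ GTPoly n lamR) :
    tangentCone (GTPoly n lamR) A
      = {y | ∃ f : (Gamma n A).ConnectedComponent → (GTIdx n → ℝ),
          (∀ c, f c ∈ compCone n A c) ∧ y = A + ∑ᶠ c, f c} := by
  classical
  ext y
  constructor
  · rintro ⟨x, hx, t, ht, rfl⟩
    refine ⟨fun c p => if (∃ hp : GTValid n p, (Gamma n A).connectedComponentMk ⟨p, hp⟩ = c)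
        then t * (x p - A p) else 0, fun c => ⟨?_, ?_, ?_⟩, ?_⟩
    · intro p hp
      exact if_neg hp
    · intro p hpc hp0
      beta_reduce
      rw [if_pos ⟨p.2, hpc⟩]
      rw [row0_eq hx hp0, row0_eq hA hp0]
      ring
    · intro p q hpc hedge hAeq
      have hadj : (Gamma n A).Adj p q := ⟨Or.inl hedge, hAeq⟩
      have hqc : (Gamma n A).connectedComponentMk q = c :=
        ((SimpleGraph.ConnectedComponent.sound hadj.reachable).symm).trans hpc
      have hex := gt_edge_le hx hedge
      constructor
      · intro he
        beta_reduce
        rw [if_pos ⟨p.2, hpc⟩, if_pos ⟨q.2, hqc⟩]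
        have h1 := hex.1 he
        have h2 : A p.1 = A q.1 := hAeq
        nlinarith
      · intro he
        beta_reduce
        rw [if_pos ⟨q.2, hqc⟩, if_pos ⟨p.2, hpc⟩]
        have h1 := hex.2 he
        have h2 : A p.1 = A q.1 := hAeq
        nlinarith
    · have : t • (x - A) = ∑ᶠ c, (fun c => (fun p =>
          if (∃ hp : GTValid n p, (Gamma n A).connectedComponentMk ⟨p, hp⟩ = c)
          then t * (x p - A p) else 0)) c := by
        rw [finsum_eq_sum_of_fintype]
        funext p
        rw [Finset.sum_apply]
        by_cases hp : GTValid n p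
        · rw [Finset.sum_eq_single ((Gamma n A).connectedComponentMk ⟨p, hp⟩)]
          · rw [if_pos ⟨hp, rfl⟩]
            simp [smul_eq_mul]
          · intro c _ hcne
            refine if_neg ?_
            rintro ⟨hp', he⟩
            exact hcne he.symm
          · intro hmem
            exact absurd (Finset.mem_univ _) hmem
        · rw [Finset.sum_eq_zero]
          · have hx0 : x p = 0 := hx.2.2 p hp
            have hA0 : A p = 0 := hA.2.2 p hp
            simp [hx0, hA0]
          · intro c _
            refine if_neg ?_
            rintro ⟨hp', _⟩
            exact hp hp'
      rw [← this]
  · rintro ⟨F, hF, rfl⟩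
    set ε : GTIdx n → ℝ := ∑ c, F c with hεdef
    have hfin : ∑ᶠ c, F c = ε := finsum_eq_sum_of_fintype F
    have hεapp : ∀ p, ε p = ∑ c, F c p := by
      intro p
      rw [hεdef, Finset.sum_apply]
    have hval : ∀ (p : GTIdx n) (hp : GTValid n p),
        ε p = F ((Gamma n A).connectedComponentMk ⟨p, hp⟩) p := by
      intro p hp
      rw [hεapp p, Finset.sum_eq_single ((Gamma n A).connectedComponentMk ⟨p, hp⟩)]
      · intro c _ hcne
        refine (hF c).1 p ?_
        rintro ⟨hp', he⟩
        exact hcne he.symm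
      · intro hmem
        exact absurd (Finset.mem_univ _) hmem
    have hinv : ∀ p, ¬ GTValid n p → ε p = 0 := by
      intro p hp
      rw [hεapp p]
      refine Finset.sum_eq_zero fun c _ => (hF c).1 p ?_
      rintro ⟨hp', _⟩
      exact hp hp'
    have hrow0 : ∀ p : GTIdx n, (p.1 : ℕ) = 0 → ε p = 0 := by
      intro p hp0
      have hp : GTValid n p := by
        rw [GTValid, hp0]
        simpa using p.2.isLt
      rw [hval p hp]
      exact (hF _).2.1 ⟨p, hp⟩ rfl hp0
    have hedgeε : ∀ p q : GTIdx n, upEdge n p q → A p = A q →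
        (((q.2 : ℕ) = (p.2 : ℕ)) → ε p ≤ ε q) ∧
        (((q.2 : ℕ) = (p.2 : ℕ) + 1) → ε q ≤ ε p) := by
      intro p q hedge hAeq
      have hp := hedge.1
      have hq := hedge.2.1
      have hadj : (Gamma n A).Adj ⟨p, hp⟩ ⟨q, hq⟩ := ⟨Or.inl hedge, hAeq⟩
      have hmk : (Gamma n A).connectedComponentMk ⟨q, hq⟩
          = (Gamma n A).connectedComponentMk ⟨p, hp⟩ :=
        (SimpleGraph.ConnectedComponent.sound hadj.reachable).symm
      rw [hval p hp, hval q hq, hmk]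
      exact (hF _).2.2 ⟨p, hp⟩ ⟨q, hq⟩ rfl hedge hAeq
    -- choose a small positive multiplier
    set gap : Fin n × Fin n × Bool → ℝ := fun k =>
      if ((k.1 : ℕ) + 1 + (k.2.1 : ℕ) < n) then
        (if k.2.2 then entryR A k.1 k.2.1 - entryR A ((k.1 : ℕ)+1) k.2.1
          else entryR A ((k.1 : ℕ)+1) k.2.1 - entryR A k.1 ((k.2.1 : ℕ)+1))
      else 0 with hgapdef
    set dd : Fin n × Fin n × Bool → ℝ := fun k =>
      if ((k.1 : ℕ) + 1 + (k.2.1 : ℕ) < n) then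
        (if k.2.2 then entryR ε ((k.1 : ℕ)+1) k.2.1 - entryR ε k.1 k.2.1
          else entryR ε k.1 ((k.2.1 : ℕ)+1) - entryR ε ((k.1 : ℕ)+1) k.2.1)
      else 0 with hdddef
    have hg : ∀ k, 0 ≤ gap k := by
      rintro ⟨i, j, b⟩
      rw [hgapdef]
      show 0 ≤ if ((i : ℕ) + 1 + (j : ℕ) < n) then _ else 0
      by_cases h : (i : ℕ) + 1 + (j : ℕ) < n
      · rw [if_pos h]
        have h2 := hA.2.1 i j h
        cases b
        · simp only [if_false, Bool.false_eq_true]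
          linarith [h2.2]
        · simp only [if_true]
          linarith [h2.1]
      · rw [if_neg h]
    have h0 : ∀ k, gap k = 0 → dd k ≤ 0 := by
      rintro ⟨i, j, b⟩ hk
      rw [hdddef]
      rw [hgapdef] at hk
      by_cases h : (i : ℕ) + 1 + (j : ℕ) < n
      · have hi1 : (i : ℕ) + 1 < n := by omega
        have hj : (j : ℕ) < n := j.isLt
        have hj1 : (j : ℕ) + 1 < n := by omega
        simp only [if_pos h] at hk ⊢
        cases b
        · -- second inequality: p = (i+1, j), q = (i, j+1)
          simp only [Bool.false_eq_true, if_false] at hk ⊢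
          set p : GTIdx n := (⟨(i : ℕ)+1, hi1⟩, ⟨(j : ℕ), hj⟩) with hpdef
          set q : GTIdx n := (⟨(i : ℕ), i.isLt⟩, ⟨(j : ℕ)+1, hj1⟩) with hqdef
          have hedge : upEdge n p q := by
            refine ⟨?_, ?_, ?_, Or.inr ?_⟩
            · show (i : ℕ) + 1 + (j : ℕ) < n; exact h
            · show (i : ℕ) + ((j : ℕ) + 1) < n; omega
            · rfl
            · rfl
          have hAeq : A p = A q := by
            rw [← entryR_nat A hi1 hj, ← entryR_nat A i.isLt hj1]
            linarith
          have := (hedgeε p q hedge hAeq).2 rfl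
          rw [entryR_nat ε i.isLt hj1, entryR_nat ε hi1 hj]
          linarith [hval p hedge.1, hval q hedge.2.1]
        · simp only [if_true] at hk ⊢
          set p : GTIdx n := (⟨(i : ℕ)+1, hi1⟩, ⟨(j : ℕ), hj⟩) with hpdef
          set q : GTIdx n := (⟨(i : ℕ), i.isLt⟩, ⟨(j : ℕ), hj⟩) with hqdef
          have hedge : upEdge n p q := by
            refine ⟨?_, ?_, ?_, Or.inl ?_⟩
            · show (i : ℕ) + 1 + (j : ℕ) < n; exact h
            · show (i : ℕ) + (j : ℕ) < n; omega
            · rfl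
            · rfl
          have hAeq : A p = A q := by
            rw [← entryR_nat A hi1 hj, ← entryR_nat A i.isLt hj]
            linarith
          have := (hedgeε p q hedge hAeq).1 rfl
          rw [entryR_nat ε hi1 hj, entryR_nat ε i.isLt hj]
          linarith
      · simp only [if_neg h]
        exact le_refl (0:ℝ)
    obtain ⟨s, hspos, hsk⟩ := exists_small_mul gap dd hg h0
    have hmemP : A + s • ε ∈ GTPoly n lamR := by
      refine ⟨?_, ?_, ?_⟩
      · intro j
        have hn : 0 < n := lt_of_le_of_lt (Nat.zero_le _) j.isLt
        rw [entryR_add_smul]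
        have hz : entryR ε 0 (j : ℕ) = 0 := by
          rw [entryR_nat ε hn j.isLt]
          exact hrow0 (⟨0, hn⟩, ⟨(j : ℕ), j.isLt⟩) rfl
        rw [hz, hA.1 j]
        ring
      · intro i j h
        have hi : i < n := by omega
        have hj : j < n := by omega
        have hk1 := hsk (⟨i, hi⟩, ⟨j, hj⟩, true)
        have hk2 := hsk (⟨i, hi⟩, ⟨j, hj⟩, false)
        rw [hgapdef, hdddef] at hk1 hk2
        simp only [if_pos (show ((⟨i, hi⟩ : Fin n) : ℕ) + 1 + ((⟨j, hj⟩ : Fin n) : ℕ) < n from h),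
          if_true, Bool.false_eq_true, if_false] at hk1 hk2
        rw [entryR_add_smul, entryR_add_smul, entryR_add_smul]
        constructor
        · linarith
        · linarith
      · intro p hp
        have h1 : A p = 0 := hA.2.2 p hp
        have h2 : ε p = 0 := hinv p hp
        simp [h1, h2]
    refine ⟨A + s • ε, hmemP, 1/s, by positivity, ?_⟩
    rw [hfin]
    congr 1
    rw [add_sub_cancel_left, smul_smul, one_div, inv_mul_cancel₀ (ne_of_gt hspos), one_smul]

noncomputable def suppSubmodule (S : Set (GTIdx n)) : Submodule ℝ (GTIdx n → ℝ) where
  carrier := {x | ∀ p, p ∉ S → x p = 0}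
  add_mem' := by
    intro a b ha hb p hp
    simp [ha p hp, hb p hp]
  zero_mem' := by
    intro p _
    rfl
  smul_mem' := by
    intro t x hx p hp
    simp [hx p hp]

theorem part2 {A : GTIdx n → ℝ}
    (f : (Gamma n A).ConnectedComponent → (GTIdx n → ℝ))
    (hf : ∀ c, f c ∈ Submodule.span ℝ (compCone n A c))
    (hsum : ∑ᶠ c, f c = 0) : ∀ c, f c = 0 := by
  classical
  have hsupp : ∀ c (p : GTIdx n),
      (¬ ∃ hp : GTValid n p, (Gamma n A).connectedComponentMk ⟨p, hp⟩ = c) → f c p = 0 := by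
    intro c
    have hle : Submodule.span ℝ (compCone n A c) ≤
        suppSubmodule {p : GTIdx n | ∃ hp : GTValid n p, (Gamma n A).connectedComponentMk ⟨p, hp⟩ = c} := by
      rw [Submodule.span_le]
      intro x hx p hp
      exact hx.1 p hp
    exact fun p hp => hle (hf c) p hp
  intro c
  funext p
  rw [finsum_eq_sum_of_fintype] at hsum
  by_cases hpc : ∃ hp : GTValid n p, (Gamma n A).connectedComponentMk ⟨p, hp⟩ = c
  · obtain ⟨hp, he⟩ := hpc
    have h1 := congrFun hsum p
    rw [Finset.sum_apply] at h1
    rw [Finset.sum_eq_single c] at h1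
    · exact h1
    · intro c' _ hcne
      refine hsupp c' p ?_
      rintro ⟨hp', he'⟩
      exact hcne (he'.symm.trans he)
    · intro hmem
      exact absurd (Finset.mem_univ _) hmem
  · exact hsupp c p hpc

noncomputable def BlSet (n : ℕ) (A : GTIdx n → ℝ) (c : (Gamma n A).ConnectedComponent) :
    Set (GTIdx n) :=
  {p | ∃ hp : GTValid n p, (Gamma n A).connectedComponentMk ⟨p, hp⟩ = c}

theorem key_iff {lamR : Fin n → ℝ} {A : GTIdx n → ℝ} (hA : A ∈ GTPoly n lamR)
    (vZ : GTIdx n → ℤ) (hvZ : ∀ p, (vZ p : ℝ) = A p) (a : GTIdx n → ℤ) :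
    ((fun i => ((a i : ℤ) : ℝ)) ∈ tangentCone (GTPoly n lamR) A)
    ↔ ((∀ i, (∀ c, i ∉ BlSet n A c) → (a - vZ) i = 0)
       ∧ ∀ c, (fun i => (((proj (BlSet n A c) (a - vZ)) i : ℤ) : ℝ)) ∈ compCone n A c) := by
  classical
  rw [part1 hA]
  rw [Set.mem_setOf_eq]
  constructor
  · rintro ⟨F, hF, heq⟩
    have hsum : ∀ p : GTIdx n, ((a p : ℤ) : ℝ) = A p + ∑ c, F c p := by
      intro p
      have := congrFun heq p
      rw [finsum_eq_sum_of_fintype] at this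
      rw [this]
      rw [Pi.add_apply, Finset.sum_apply]
    have hsingle : ∀ (p : GTIdx n) (hp : GTValid n p),
        ∑ c, F c p = F ((Gamma n A).connectedComponentMk ⟨p, hp⟩) p := by
      intro p hp
      rw [Finset.sum_eq_single ((Gamma n A).connectedComponentMk ⟨p, hp⟩)]
      · intro c _ hcne
        refine (hF c).1 p ?_
        rintro ⟨hp', he⟩
        exact hcne he.symm
      · intro hmem
        exact absurd (Finset.mem_univ _) hmem
    have hzero : ∀ i, (∀ c, i ∉ BlSet n A c) → (a - vZ) i = 0 := by
      intro p hp
      have hnv : ¬ GTValid n p := by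
        intro hval
        exact hp ((Gamma n A).connectedComponentMk ⟨p, hval⟩) ⟨hval, rfl⟩
      have hF0 : ∀ c, F c p = 0 := by
        intro c
        refine (hF c).1 p ?_
        rintro ⟨hp', _⟩
        exact hnv hp'
      have := hsum p
      rw [Finset.sum_eq_zero (fun c _ => hF0 c), add_zero] at this
      rw [← hvZ p] at this
      have : a p = vZ p := by exact_mod_cast this
      simp [this]
    refine ⟨hzero, fun c => ?_⟩
    have hFc : (fun i => (((proj (BlSet n A c) (a - vZ)) i : ℤ) : ℝ)) = F c := by
      funext p
      by_cases hp : p ∈ BlSet n A c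
      · rw [proj, if_pos hp]
        obtain ⟨hpv, he⟩ := hp
        have h1 := hsum p
        rw [hsingle p hpv, he] at h1
        rw [← hvZ p] at h1
        simp only [Pi.sub_apply]
        push_cast
        linarith
      · rw [proj, if_neg hp]
        rw [(hF c).1 p hp]
        simp
    rw [hFc]
    exact hF c
  · rintro ⟨hzero, hcones⟩
    refine ⟨fun c => (fun p => (((proj (BlSet n A c) (a - vZ)) p : ℤ) : ℝ)), hcones, ?_⟩
    rw [finsum_eq_sum_of_fintype]
    funext p
    rw [Pi.add_apply, Finset.sum_apply]
    by_cases hp : GTValid n p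
    · have hmem : p ∈ BlSet n A ((Gamma n A).connectedComponentMk ⟨p, hp⟩) := ⟨hp, rfl⟩
      rw [Finset.sum_eq_single ((Gamma n A).connectedComponentMk ⟨p, hp⟩)]
      · rw [proj, if_pos hmem]
        rw [← hvZ p]
        simp only [Pi.sub_apply]
        push_cast
        ring
      · intro c _ hcne
        rw [proj, if_neg]
        · simp
        · rintro ⟨hp', he⟩
          exact hcne he.symm
      · intro hmem'
        exact absurd (Finset.mem_univ _) hmem'
    · have hnb : ∀ c, p ∉ BlSet n A c := by
        rintro c ⟨hp', _⟩
        exact hp hp'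
      rw [Finset.sum_eq_zero]
      · have h2 := hzero p hnb
        have h3 : a p = vZ p := by
          have := h2
          simp only [Pi.sub_apply] at this
          omega
        rw [h3, hvZ p, add_zero]
      · intro c _
        rw [proj, if_neg (hnb c)]
        simp

end GTPart

/-- the tangent cone at a vertex v of GT_λ decomposes as the direct Minkowski
sum v + Σ_Δ C_Δ over the connected components Δ of Γ_v, and consequently
σ(C_v) = t^v · Π_Δ σ(C_Δ). -/
theorem statement14 (n : ℕ) (lam : Fin n → ℤ)
    (hreg : ∀ i j : Fin n, i < j → lam j < lam i)
    (A : GTIdx n → ℝ)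
    (hA : A ∈ Set.extremePoints ℝ (GTPoly n (fun i => (lam i : ℝ))))
    (vZ : GTIdx n → ℤ) (hvZ : ∀ p, (vZ p : ℝ) = A p) :
    (tangentCone (GTPoly n (fun i => (lam i : ℝ))) A
       = {y | ∃ f : (Gamma n A).ConnectedComponent → (GTIdx n → ℝ),
           (∀ c, f c ∈ compCone n A c) ∧ y = A + ∑ᶠ c, f c}) ∧
    (∀ f : (Gamma n A).ConnectedComponent → (GTIdx n → ℝ),
       (∀ c, f c ∈ Submodule.span ℝ (compCone n A c)) → ∑ᶠ c, f c = 0 → ∀ c, f c = 0) ∧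
    (∀ r : KK (GTIdx n),
      Represents r (indSet (tangentCone (GTPoly n (fun i => (lam i : ℝ))) A)) →
      ∀ g : (Gamma n A).ConnectedComponent → KK (GTIdx n),
        (∀ c, Represents (g c) (indSet (compCone n A c))) →
        r = tmon (GTIdx n) vZ * ∏ᶠ c, g c) := by
  classical
  have hAP : A ∈ GTPoly n (fun i => (lam i : ℝ)) := hA.1
  refine ⟨part1 hAP, fun f hf hsum => part2 f hf hsum, ?_⟩
  intro r hr g hg
  have hdis : ∀ c c' : (Gamma n A).ConnectedComponent, c ≠ c' →
      Disjoint (BlSet n A c) (BlSet n A c') := by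
    intro c c' hne
    rw [Set.disjoint_left]
    rintro p ⟨hp, he⟩ ⟨hp', he'⟩
    exact hne (he.symm.trans he')
  have hfc : ∀ c (x : GTIdx n → ℤ), indSet (compCone n A c) x ≠ 0 →
      ∀ i ∉ BlSet n A c, x i = 0 := by
    intro c x hx p hp
    by_cases hmem : (fun i => ((x i : ℤ) : ℝ)) ∈ compCone n A c
    · have h2 : ((x p : ℤ) : ℝ) = 0 := hmem.1 p hp
      exact_mod_cast h2
    · rw [indSet, if_neg hmem] at hx
      exact absurd rfl hx
  have hrep := represents_CS (BlSet n A) hdis (fun c => indSet (compCone n A c)) hfc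
    g hg Finset.univ
  have hshift := represents_shift hrep vZ
  have hfun : (fun a => CSfun (BlSet n A) (fun c => indSet (compCone n A c)) Finset.univ (a - vZ))
      = indSet (tangentCone (GTPoly n (fun i => (lam i : ℝ))) A) := by
    funext a
    rw [CSfun, indSet]
    have hprod : (∏ c, indSet (compCone n A c) (proj (BlSet n A c) (a - vZ)))
        = if (∀ c, (fun i => (((proj (BlSet n A c) (a - vZ)) i : ℤ) : ℝ)) ∈ compCone n A c)
          then (1 : ℚ) else 0 := by
      rw [← Fintype.prod_boole]
      refine Finset.prod_congr rfl fun c _ => ?_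
      rw [indSet]
    rw [hprod]
    rw [key_iff hAP vZ hvZ a]
    by_cases h1 : ∀ i, (∀ c, i ∉ BlSet n A c) → (a - vZ) i = 0
    · rw [if_pos (fun i hi => h1 i (fun c => hi c (Finset.mem_univ c)))]
      by_cases h2 : ∀ c, (fun i => (((proj (BlSet n A c) (a - vZ)) i : ℤ) : ℝ)) ∈ compCone n A c
      · rw [if_pos h2, if_pos ⟨h1, h2⟩]
      · rw [if_neg h2, if_neg (fun h => h2 h.2)]
    · rw [if_neg (fun h => h1 (fun i hi => h i (fun c _ => hi c)))]
      rw [if_neg (fun h => h1 h.1)]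
  rw [hfun] at hshift
  rw [finprod_eq_prod_of_fintype]
  exact represents_unique hr hshift
end
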